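/- arXiv:cond-mat/0002244 — 3 statements merged into one kernel-verified Lean document; each statement's English description precedes it below -/
import Mathlib

section
/- Let p ≥ 2 be an integer. There exists a constant C > 0, depending only on p, such that for every T > 0, every M > 0, and every family α = (α_n)_{n∈ℤ} of continuous real functions on [0,T) with sup_{0≤t<T} Σ_{n∈ℤ} α_n(t)² ≤ M², the double series Σ_{m∈ℤ} ∫₀ᵗ G₁(n−m, t−s)·α_m(s)^p ds converges absolutely for every n ∈ ℤ and t ∈ [0,T), and sup_{0≤t<T} Σ_{n∈ℤ} ( Σ_{m∈ℤ} ∫₀ᵗ G₁(n−m, t−s)·α_m(s)^p ds )² ≤ C·M^{2p}·(T² + T⁴)². -/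
open Set Filter

/-- Lattice Green function `G₁(n,t) = (2/π) ∫_{-π}^{π} cos(2σn) sin(2t sin σ) sin σ dσ`. -/
noncomputable def G1fun (n : ℤ) (t : ℝ) : ℝ :=
  (2 / Real.pi) * ∫ σ in (-Real.pi)..Real.pi,
    Real.cos (2 * σ * (n : ℝ)) * Real.sin (2 * t * Real.sin σ) * Real.sin σ

/-- Lattice Green function `G(n,t) = (2/π) ∫_{-π}^{π} cos(2σn) sin(2t sin σ)/sin σ dσ`,
with the integrand extended by its limiting value `2t cos(2σn)` where `sin σ = 0`. -/
noncomputable def Gfun (n : ℤ) (t : ℝ) : ℝ :=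
  (2 / Real.pi) * ∫ σ in (-Real.pi)..Real.pi,
    if Real.sin σ = 0 then 2 * t * Real.cos (2 * σ * (n : ℝ))
    else Real.cos (2 * σ * (n : ℝ)) * Real.sin (2 * t * Real.sin σ) / Real.sin σ

/-- Discrete Laplacian `Δf_n = f_{n+1} + f_{n-1} - 2 f_n`. -/
noncomputable def lap (f : ℤ → ℝ) (n : ℤ) : ℝ := f (n + 1) + f (n - 1) - 2 * f n

/-- The tail sum `Σ_{m ≤ n-1} f_m`. -/
noncomputable def tailSum (f : ℤ → ℝ) (n : ℤ) : ℝ := ∑' m : {m : ℤ // m ≤ n - 1}, f m.1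

/-- Convergence of the tail series `Σ_{m ≤ n-1} f_m`. -/
def TailSummable (f : ℤ → ℝ) (n : ℤ) : Prop :=
  Summable (fun m : {m : ℤ // m ≤ n - 1} => f m.1)

/-- The family `α` (with time derivatives taken within `s`) has finite energy norm on `[0,T)`:
`sup_{0≤t<T} [ Σ_n (Σ_{m≤n-1} α̇_m(t))² + Σ_n α_n(t)² ] < ∞`
(in particular all the series involved converge). -/
def FiniteEnergyOn (α : ℤ → ℝ → ℝ) (s : Set ℝ) (T : ℝ) : Prop :=
  (∀ n : ℤ, ∀ t ∈ Ico (0 : ℝ) T, TailSummable (fun m => derivWithin (α m) s t) n) ∧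
  ∃ M : ℝ, ∀ t ∈ Ico (0 : ℝ) T,
    Summable (fun n : ℤ => (tailSum (fun m => derivWithin (α m) s t) n) ^ 2) ∧
    Summable (fun n : ℤ => (α n t) ^ 2) ∧
    (∑' n : ℤ, (tailSum (fun m => derivWithin (α m) s t) n) ^ 2)
      + (∑' n : ℤ, (α n t) ^ 2) ≤ M

/-- `α` solves the FPU lattice equation `α̈_n = Δα_n + χ Δ(α_n^p)` on `s`. -/
def SolvesFPU (p : ℕ) (χ : ℝ) (α : ℤ → ℝ → ℝ) (s : Set ℝ) : Prop :=
  ∀ n : ℤ, ∀ t ∈ s,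
    derivWithin (derivWithin (α n) s) s t
      = lap (fun m => α m t) n + χ * lap (fun m => (α m t) ^ p) n

/-- `α` solves the sine-Gordon lattice equation `α̈_n = Δα_n + χ Δ(sin α_n)` on `s`. -/
def SolvesSG (χ : ℝ) (α : ℤ → ℝ → ℝ) (s : Set ℝ) : Prop :=
  ∀ n : ℤ, ∀ t ∈ s,
    derivWithin (derivWithin (α n) s) s t
      = lap (fun m => α m t) n + χ * lap (fun m => Real.sin (α m t)) n

/-- `u` solves the on-site lattice equation `ü_n = Δu_n - χ u_n^p` on `s`. -/
def SolvesOnSite (p : ℕ) (χ : ℝ) (u : ℤ → ℝ → ℝ) (s : Set ℝ) : Prop :=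
  ∀ n : ℤ, ∀ t ∈ s,
    derivWithin (derivWithin (u n) s) s t = lap (fun m => u m t) n - χ * (u n t) ^ p

/-- On-site energy norm finiteness: `sup_{0≤t<T} Σ_n [u̇_n(t)² + u_n(t)²] < ∞`. -/
def OnSiteFiniteEnergy (u : ℤ → ℝ → ℝ) (s : Set ℝ) (T : ℝ) : Prop :=
  ∃ M : ℝ, ∀ t ∈ Ico (0 : ℝ) T,
    Summable (fun n : ℤ => (derivWithin (u n) s t) ^ 2 + (u n t) ^ 2) ∧
    (∑' n : ℤ, ((derivWithin (u n) s t) ^ 2 + (u n t) ^ 2)) ≤ M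

open intervalIntegral

noncomputable def Kf (t σ : ℝ) : ℝ := Real.sin (2*t*Real.sin σ) * Real.sin σ
noncomputable def Kf1 (t σ : ℝ) : ℝ :=
  2*t*Real.cos σ * Real.cos (2*t*Real.sin σ) * Real.sin σ + Real.sin (2*t*Real.sin σ) * Real.cos σ
noncomputable def Kf2 (t σ : ℝ) : ℝ :=
  (4*t*(Real.cos σ)^2 - 2*t*(Real.sin σ)^2) * Real.cos (2*t*Real.sin σ)
    - 4*t^2*(Real.cos σ)^2 * Real.sin σ * Real.sin (2*t*Real.sin σ)
    - Real.sin σ * Real.sin (2*t*Real.sin σ)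

lemma hasDerivAt_Kf (t σ : ℝ) : HasDerivAt (Kf t) (Kf1 t σ) σ := by
  have hg : HasDerivAt (fun σ => 2*t*Real.sin σ) (2*t*Real.cos σ) σ :=
    (Real.hasDerivAt_sin σ).const_mul (2*t)
  have hsg : HasDerivAt (fun σ => Real.sin (2*t*Real.sin σ))
      (Real.cos (2*t*Real.sin σ) * (2*t*Real.cos σ)) σ :=
    by have := (Real.hasDerivAt_sin (2*t*Real.sin σ)).comp σ hg; exact this
  have := hsg.mul (Real.hasDerivAt_sin σ)
  refine this.congr_deriv ?_
  unfold Kf1; ring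

lemma hasDerivAt_Kf1 (t σ : ℝ) : HasDerivAt (Kf1 t) (Kf2 t σ) σ := by
  have hg : HasDerivAt (fun σ => 2*t*Real.sin σ) (2*t*Real.cos σ) σ :=
    (Real.hasDerivAt_sin σ).const_mul (2*t)
  have hsg : HasDerivAt (fun σ => Real.sin (2*t*Real.sin σ))
      (Real.cos (2*t*Real.sin σ) * (2*t*Real.cos σ)) σ :=
    by have := (Real.hasDerivAt_sin (2*t*Real.sin σ)).comp σ hg; exact this
  have hcg : HasDerivAt (fun σ => Real.cos (2*t*Real.sin σ))
      (-Real.sin (2*t*Real.sin σ) * (2*t*Real.cos σ)) σ :=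
    by have := (Real.hasDerivAt_cos (2*t*Real.sin σ)).comp σ hg; exact this
  have h1 : HasDerivAt (fun σ => 2*t*Real.cos σ * Real.cos (2*t*Real.sin σ) * Real.sin σ)
      (((2*t*(-Real.sin σ)) * Real.cos (2*t*Real.sin σ)
         + 2*t*Real.cos σ * (-Real.sin (2*t*Real.sin σ) * (2*t*Real.cos σ))) * Real.sin σ
        + 2*t*Real.cos σ * Real.cos (2*t*Real.sin σ) * Real.cos σ) σ := by
    exact (((Real.hasDerivAt_cos σ).const_mul (2*t)).mul hcg).mul (Real.hasDerivAt_sin σ)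
  have h2 : HasDerivAt (fun σ => Real.sin (2*t*Real.sin σ) * Real.cos σ)
      (Real.cos (2*t*Real.sin σ) * (2*t*Real.cos σ) * Real.cos σ
        + Real.sin (2*t*Real.sin σ) * (-Real.sin σ)) σ :=
    hsg.mul (Real.hasDerivAt_cos σ)
  have := h1.add h2
  refine this.congr_deriv ?_
  unfold Kf2; ring

lemma Kf2_abs_le (t σ : ℝ) : |Kf2 t σ| ≤ 8 * (|t| + |t|^3) := by
  set g := 2*t*Real.sin σ with hgdef
  have hs : |Real.sin σ| ≤ 1 := Real.abs_sin_le_one σ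
  have hc : |Real.cos σ| ≤ 1 := Real.abs_cos_le_one σ
  have hs2 : (Real.sin σ)^2 ≤ 1 := Real.sin_sq_le_one σ
  have hc2 : (Real.cos σ)^2 ≤ 1 := Real.cos_sq_le_one σ
  have hsg : |Real.sin g| ≤ 2 * |t| := by
    calc |Real.sin g| ≤ |g| := Real.abs_sin_le_abs
    _ = 2 * |t| * |Real.sin σ| := by rw [hgdef, abs_mul, abs_mul]; norm_num
    _ ≤ 2 * |t| * 1 := by
        have : (0:ℝ) ≤ 2 * |t| := by positivity
        exact mul_le_mul_of_nonneg_left hs this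
    _ = 2 * |t| := by ring
  have hcg : |Real.cos g| ≤ 1 := Real.abs_cos_le_one _
  have A1 : |(4*t*(Real.cos σ)^2 - 2*t*(Real.sin σ)^2) * Real.cos g| ≤ 6 * |t| := by
    rw [abs_mul]
    have hA : |4*t*(Real.cos σ)^2 - 2*t*(Real.sin σ)^2| ≤ 6 * |t| := by
      have h0 : |4*t*(Real.cos σ)^2 - 2*t*(Real.sin σ)^2|
          ≤ |4*t*(Real.cos σ)^2| + |2*t*(Real.sin σ)^2| := abs_sub _ _
      have e1 : |4*t*(Real.cos σ)^2| = 4 * |t| * (Real.cos σ)^2 := by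
        rw [abs_mul, abs_mul, abs_of_nonneg (sq_nonneg (Real.cos σ))]; norm_num
      have e2 : |2*t*(Real.sin σ)^2| = 2 * |t| * (Real.sin σ)^2 := by
        rw [abs_mul, abs_mul, abs_of_nonneg (sq_nonneg (Real.sin σ))]; norm_num
      rw [e1, e2] at h0
      nlinarith [mul_le_mul_of_nonneg_left hc2 (abs_nonneg t),
        mul_le_mul_of_nonneg_left hs2 (abs_nonneg t)]
    have := mul_le_mul hA hcg (abs_nonneg _) (by positivity : (0:ℝ) ≤ 6*|t|)
    linarith
  have A2 : |4*t^2*(Real.cos σ)^2 * Real.sin σ * Real.sin g| ≤ 8 * |t|^3 := by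
    rw [abs_mul]
    have hB : |4*t^2*(Real.cos σ)^2 * Real.sin σ| ≤ 4 * |t|^2 := by
      have e1 : |4*t^2*(Real.cos σ)^2 * Real.sin σ|
          = 4 * |t|^2 * (Real.cos σ)^2 * |Real.sin σ| := by
        rw [abs_mul, abs_mul, abs_mul, abs_of_nonneg (sq_nonneg (Real.cos σ)), ← sq_abs t]
        norm_num
      rw [e1]
      nlinarith [mul_le_mul_of_nonneg_left hc2 (by positivity : (0:ℝ) ≤ 4*|t|^2),
        sq_nonneg (Real.cos σ), abs_nonneg (Real.sin σ), sq_nonneg (|t|),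
        mul_le_mul_of_nonneg_left hs (by positivity : (0:ℝ) ≤ 4*|t|^2*(Real.cos σ)^2)]
    have := mul_le_mul hB hsg (abs_nonneg _) (by positivity : (0:ℝ) ≤ 4*|t|^2)
    calc |4*t^2*(Real.cos σ)^2 * Real.sin σ| * |Real.sin g| ≤ 4*|t|^2 * (2*|t|) := this
    _ = 8 * |t|^3 := by ring
  have A3 : |Real.sin σ * Real.sin g| ≤ 2 * |t| := by
    rw [abs_mul]
    have := mul_le_mul hs hsg (abs_nonneg _) (by norm_num : (0:ℝ) ≤ 1)
    linarith
  have split : |Kf2 t σ| ≤ |(4*t*(Real.cos σ)^2 - 2*t*(Real.sin σ)^2) * Real.cos g|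
      + |4*t^2*(Real.cos σ)^2 * Real.sin σ * Real.sin g| + |Real.sin σ * Real.sin g| := by
    unfold Kf2
    calc |(4*t*(Real.cos σ)^2 - 2*t*(Real.sin σ)^2) * Real.cos g
          - 4*t^2*(Real.cos σ)^2 * Real.sin σ * Real.sin g - Real.sin σ * Real.sin g|
        ≤ |(4*t*(Real.cos σ)^2 - 2*t*(Real.sin σ)^2) * Real.cos g
          - 4*t^2*(Real.cos σ)^2 * Real.sin σ * Real.sin g| + |Real.sin σ * Real.sin g| :=
          abs_sub _ _
    _ ≤ |(4*t*(Real.cos σ)^2 - 2*t*(Real.sin σ)^2) * Real.cos g|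
          + |4*t^2*(Real.cos σ)^2 * Real.sin σ * Real.sin g| + |Real.sin σ * Real.sin g| := by
        have := abs_sub ((4*t*(Real.cos σ)^2 - 2*t*(Real.sin σ)^2) * Real.cos g)
          (4*t^2*(Real.cos σ)^2 * Real.sin σ * Real.sin g)
        linarith
  calc |Kf2 t σ| ≤ _ := split
  _ ≤ 6*|t| + 8*|t|^3 + 2*|t| := by linarith
  _ = 8 * (|t| + |t|^3) := by ring

lemma continuous_Kf1 (t : ℝ) : Continuous (Kf1 t) := by unfold Kf1; fun_prop
lemma continuous_Kf2 (t : ℝ) : Continuous (Kf2 t) := by unfold Kf2; fun_prop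

lemma Kf_pi (t : ℝ) : Kf t Real.pi = 0 := by simp [Kf]
lemma Kf_negpi (t : ℝ) : Kf t (-Real.pi) = 0 := by simp [Kf]
lemma Kf1_pi (t : ℝ) : Kf1 t Real.pi = 0 := by simp [Kf1]
lemma Kf1_negpi (t : ℝ) : Kf1 t (-Real.pi) = 0 := by simp [Kf1]

/-- weight -/
noncomputable def wfun (n : ℤ) : ℝ := if n = 0 then 1 else 1/(n:ℝ)^2

lemma wfun_nonneg (n : ℤ) : 0 ≤ wfun n := by
  unfold wfun; split <;> positivity

lemma wfun_le_one (n : ℤ) : wfun n ≤ 1 := by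
  unfold wfun; split
  · exact le_refl _
  · rename_i h
    have h1 : (1:ℝ) ≤ (n:ℝ)^2 := by
      have : (1:ℤ) ≤ n^2 := by
        rcases lt_or_gt_of_ne h with h' | h' <;> nlinarith
      exact_mod_cast this
    rw [div_le_one (by positivity)]
    linarith

lemma abs_t_le (t : ℝ) : |t| ≤ |t| + |t|^3 := by nlinarith [abs_nonneg t, pow_nonneg (abs_nonneg t) 3]

lemma integrand_eq (n : ℤ) (t : ℝ) : ∀ σ : ℝ,
    Real.cos (2 * σ * (n : ℝ)) * Real.sin (2 * t * Real.sin σ) * Real.sin σ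
      = Kf t σ * Real.cos (2 * σ * (n : ℝ)) := by
  intro σ; unfold Kf; ring

lemma G1_bound_zero (t : ℝ) : |G1fun 0 t| ≤ 8 * |t| := by
  have hpi : (0:ℝ) < Real.pi := Real.pi_pos
  have habs : |(2:ℝ) / Real.pi| = 2 / Real.pi := abs_of_pos (by positivity)
  have hcont : Continuous (fun σ => Real.cos (2 * σ * ((0:ℤ) : ℝ))
      * Real.sin (2 * t * Real.sin σ) * Real.sin σ) := by fun_prop
  have hint : IntervalIntegrable (fun σ => Real.cos (2 * σ * ((0:ℤ) : ℝ))
      * Real.sin (2 * t * Real.sin σ) * Real.sin σ) MeasureTheory.volume (-Real.pi) Real.pi :=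
    hcont.intervalIntegrable _ _
  have key : |∫ σ in (-Real.pi)..Real.pi, Real.cos (2 * σ * ((0:ℤ) : ℝ))
      * Real.sin (2 * t * Real.sin σ) * Real.sin σ| ≤ 2 * Real.pi * (2 * |t|) := by
    have h1 := intervalIntegral.abs_integral_le_integral_abs (μ := MeasureTheory.volume)
      (a := -Real.pi) (b := Real.pi)
      (f := fun σ => Real.cos (2 * σ * ((0:ℤ) : ℝ)) * Real.sin (2 * t * Real.sin σ) * Real.sin σ)
      (by linarith)
    have h2 : ∫ σ in (-Real.pi)..Real.pi, |Real.cos (2 * σ * ((0:ℤ) : ℝ))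
        * Real.sin (2 * t * Real.sin σ) * Real.sin σ| ≤ 2 * Real.pi * (2 * |t|) := by
      have hmono := intervalIntegral.integral_mono_on (a := -Real.pi) (b := Real.pi)
        (f := fun σ => |Real.cos (2 * σ * ((0:ℤ) : ℝ)) * Real.sin (2 * t * Real.sin σ) * Real.sin σ|)
        (g := fun _ => 2 * |t|) (by linarith) hint.abs
        (intervalIntegrable_const) ?_
      · calc ∫ σ in (-Real.pi)..Real.pi, |Real.cos (2 * σ * ((0:ℤ) : ℝ))
            * Real.sin (2 * t * Real.sin σ) * Real.sin σ| ≤ ∫ _ in (-Real.pi)..Real.pi, 2*|t| :=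
            hmono
        _ = 2 * Real.pi * (2 * |t|) := by
            rw [intervalIntegral.integral_const, smul_eq_mul]; ring
      · intro σ _
        have e1 : |Real.cos (2 * σ * ((0:ℤ) : ℝ)) * Real.sin (2 * t * Real.sin σ) * Real.sin σ|
            = |Real.cos (2 * σ * ((0:ℤ) : ℝ))| * |Real.sin (2 * t * Real.sin σ)| * |Real.sin σ| := by
          rw [abs_mul, abs_mul]
        rw [e1]
        have b1 : |Real.cos (2 * σ * ((0:ℤ) : ℝ))| ≤ 1 := Real.abs_cos_le_one _
        have b2 : |Real.sin (2 * t * Real.sin σ)| ≤ 2 * |t| := by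
          calc |Real.sin (2 * t * Real.sin σ)| ≤ |2 * t * Real.sin σ| := Real.abs_sin_le_abs
          _ = 2 * |t| * |Real.sin σ| := by rw [abs_mul, abs_mul]; norm_num
          _ ≤ 2 * |t| * 1 := mul_le_mul_of_nonneg_left (Real.abs_sin_le_one σ) (by positivity)
          _ = 2 * |t| := by ring
        have b3 : |Real.sin σ| ≤ 1 := Real.abs_sin_le_one σ
        have step1 : |Real.cos (2 * σ * ((0:ℤ) : ℝ))| * |Real.sin (2 * t * Real.sin σ)|
            ≤ 1 * (2 * |t|) := mul_le_mul b1 b2 (abs_nonneg _) zero_le_one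
        have step2 := mul_le_mul step1 b3 (abs_nonneg _) (by positivity : (0:ℝ) ≤ 1 * (2*|t|))
        calc |Real.cos (2 * σ * ((0:ℤ) : ℝ))| * |Real.sin (2 * t * Real.sin σ)| * |Real.sin σ|
            ≤ 1 * (2 * |t|) * 1 := step2
        _ = 2 * |t| := by ring
    linarith
  unfold G1fun
  rw [abs_mul, habs]
  calc 2 / Real.pi * |∫ σ in (-Real.pi)..Real.pi, Real.cos (2 * σ * ((0:ℤ) : ℝ))
      * Real.sin (2 * t * Real.sin σ) * Real.sin σ| ≤ 2 / Real.pi * (2 * Real.pi * (2 * |t|)) :=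
      mul_le_mul_of_nonneg_left key (by positivity)
  _ = 8 * |t| := by field_simp; ring

lemma G1_bound_ne (n : ℤ) (hn : n ≠ 0) (t : ℝ) :
    |G1fun n t| ≤ 8 * (|t| + |t|^3) / (n:ℝ)^2 := by
  have hpi : (0:ℝ) < Real.pi := Real.pi_pos
  have hn' : ((n:ℝ)) ≠ 0 := Int.cast_ne_zero.mpr hn
  have h2n : (2*(n:ℝ)) ≠ 0 := mul_ne_zero two_ne_zero hn'
  -- linear inner function and its derivative
  have hlin : ∀ σ : ℝ, HasDerivAt (fun σ : ℝ => 2*σ*(n:ℝ)) (2*(n:ℝ)) σ := by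
    intro σ
    have h0 : (fun σ : ℝ => 2*σ*(n:ℝ)) = fun σ : ℝ => (2*(n:ℝ))*σ := by funext x; ring
    rw [h0]
    simpa using (hasDerivAt_id σ).const_mul (2*(n:ℝ))
  have hv : ∀ σ : ℝ, HasDerivAt (fun σ => Real.sin (2*σ*(n:ℝ)) / (2*(n:ℝ)))
      (Real.cos (2*σ*(n:ℝ))) σ := by
    intro σ
    have := ((Real.hasDerivAt_sin (2*σ*(n:ℝ))).comp σ (hlin σ)).div_const (2*(n:ℝ))
    refine this.congr_deriv ?_
    rw [mul_div_assoc, div_self h2n, mul_one]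
  have hw : ∀ σ : ℝ, HasDerivAt (fun σ => -Real.cos (2*σ*(n:ℝ)) / ((2*(n:ℝ))*(2*(n:ℝ))))
      (Real.sin (2*σ*(n:ℝ)) / (2*(n:ℝ))) σ := by
    intro σ
    have h0 := ((Real.hasDerivAt_cos (2*σ*(n:ℝ))).comp σ (hlin σ)).neg.div_const
      ((2*(n:ℝ))*(2*(n:ℝ)))
    refine h0.congr_deriv ?_
    rw [neg_mul, neg_neg, mul_div_mul_right _ _ h2n]
  have hKf1int : IntervalIntegrable (Kf1 t) MeasureTheory.volume (-Real.pi) Real.pi :=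
    (continuous_Kf1 t).intervalIntegrable _ _
  have hKf2int : IntervalIntegrable (Kf2 t) MeasureTheory.volume (-Real.pi) Real.pi :=
    (continuous_Kf2 t).intervalIntegrable _ _
  have hcosint : IntervalIntegrable (fun σ => Real.cos (2*σ*(n:ℝ))) MeasureTheory.volume
      (-Real.pi) Real.pi := (by fun_prop : Continuous fun σ:ℝ => Real.cos (2*σ*(n:ℝ))).intervalIntegrable _ _
  have hsinint : IntervalIntegrable (fun σ => Real.sin (2*σ*(n:ℝ)) / (2*(n:ℝ)))
      MeasureTheory.volume (-Real.pi) Real.pi :=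
    (by fun_prop : Continuous fun σ:ℝ => Real.sin (2*σ*(n:ℝ)) / (2*(n:ℝ))).intervalIntegrable _ _
  -- boundary values of v
  have hsinpi : Real.sin (2*Real.pi*(n:ℝ)) = 0 := by
    have : (2*Real.pi*(n:ℝ)) = ((2*n : ℤ) : ℝ) * Real.pi := by push_cast; ring
    rw [this, Real.sin_int_mul_pi]
  have hsinnegpi : Real.sin (2*(-Real.pi)*(n:ℝ)) = 0 := by
    have : (2*(-Real.pi)*(n:ℝ)) = ((-(2*n) : ℤ) : ℝ) * Real.pi := by push_cast; ring
    rw [this, Real.sin_int_mul_pi]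
  -- first integration by parts
  have ibp1 := intervalIntegral.integral_mul_deriv_eq_deriv_mul
    (u := Kf t) (v := fun σ => Real.sin (2*σ*(n:ℝ)) / (2*(n:ℝ)))
    (u' := Kf1 t) (v' := fun σ => Real.cos (2*σ*(n:ℝ)))
    (fun x _ => hasDerivAt_Kf t x) (fun x _ => hv x) hKf1int hcosint
  have ibp2 := intervalIntegral.integral_mul_deriv_eq_deriv_mul
    (u := Kf1 t) (v := fun σ => -Real.cos (2*σ*(n:ℝ)) / ((2*(n:ℝ))*(2*(n:ℝ))))
    (u' := Kf2 t) (v' := fun σ => Real.sin (2*σ*(n:ℝ)) / (2*(n:ℝ)))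
    (fun x _ => hasDerivAt_Kf1 t x) (fun x _ => hw x) hKf2int hsinint
  rw [Kf_pi, Kf_negpi] at ibp1
  rw [Kf1_pi, Kf1_negpi] at ibp2
  simp only [zero_mul, sub_zero, zero_sub] at ibp1 ibp2
  -- hence the integral equals the second-derivative integral
  have key : ∫ σ in (-Real.pi)..Real.pi, Kf t σ * Real.cos (2*σ*(n:ℝ))
      = ∫ σ in (-Real.pi)..Real.pi, Kf2 t σ * (-Real.cos (2*σ*(n:ℝ)) / ((2*(n:ℝ))*(2*(n:ℝ)))) := by
    rw [ibp1, ibp2, neg_neg]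
  -- bound the right-hand side
  have hpibd : |∫ σ in (-Real.pi)..Real.pi,
      Kf2 t σ * (-Real.cos (2*σ*(n:ℝ)) / ((2*(n:ℝ))*(2*(n:ℝ))))|
      ≤ 2 * Real.pi * (8 * (|t| + |t|^3) / (4*(n:ℝ)^2)) := by
    have hcont2 : Continuous (fun σ => Kf2 t σ * (-Real.cos (2*σ*(n:ℝ)) / ((2*(n:ℝ))*(2*(n:ℝ))))) := by
      apply (continuous_Kf2 t).mul
      fun_prop
    have hint2 := hcont2.intervalIntegrable (μ := MeasureTheory.volume) (-Real.pi) Real.pi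
    have h1 := intervalIntegral.abs_integral_le_integral_abs (μ := MeasureTheory.volume)
      (a := -Real.pi) (b := Real.pi)
      (f := fun σ => Kf2 t σ * (-Real.cos (2*σ*(n:ℝ)) / ((2*(n:ℝ))*(2*(n:ℝ)))))
      (by linarith [Real.pi_pos])
    have h2 : ∫ σ in (-Real.pi)..Real.pi,
        |Kf2 t σ * (-Real.cos (2*σ*(n:ℝ)) / ((2*(n:ℝ))*(2*(n:ℝ))))|
        ≤ 2 * Real.pi * (8 * (|t| + |t|^3) / (4*(n:ℝ)^2)) := by
      have hmono := intervalIntegral.integral_mono_on (a := -Real.pi) (b := Real.pi)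
        (f := fun σ => |Kf2 t σ * (-Real.cos (2*σ*(n:ℝ)) / ((2*(n:ℝ))*(2*(n:ℝ))))|)
        (g := fun _ => 8 * (|t| + |t|^3) / (4*(n:ℝ)^2)) (by linarith [Real.pi_pos]) hint2.abs
        intervalIntegrable_const ?_
      · calc ∫ σ in (-Real.pi)..Real.pi,
            |Kf2 t σ * (-Real.cos (2*σ*(n:ℝ)) / ((2*(n:ℝ))*(2*(n:ℝ))))|
            ≤ ∫ _ in (-Real.pi)..Real.pi, 8 * (|t| + |t|^3) / (4*(n:ℝ)^2) := hmono
        _ = 2 * Real.pi * (8 * (|t| + |t|^3) / (4*(n:ℝ)^2)) := by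
            rw [intervalIntegral.integral_const, smul_eq_mul]; ring
      · intro σ _
        rw [abs_mul, abs_div, abs_neg]
        have e2 : |(2*(n:ℝ))*(2*(n:ℝ))| = 4*(n:ℝ)^2 := by
          rw [abs_mul]
          have : |2*(n:ℝ)| * |2*(n:ℝ)| = (2*(n:ℝ))^2 := by rw [← abs_mul, ← sq, abs_of_nonneg (sq_nonneg _)]
          rw [this]; ring
        rw [e2]
        have hK := Kf2_abs_le t σ
        have hn2 : (0:ℝ) < 4*(n:ℝ)^2 := by positivity
        have hcb : |Real.cos (2*σ*(n:ℝ))| / (4*(n:ℝ)^2) ≤ 1 / (4*(n:ℝ)^2) :=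
          (div_le_div_iff_of_pos_right hn2).mpr (Real.abs_cos_le_one _)
        calc |Kf2 t σ| * (|Real.cos (2*σ*(n:ℝ))| / (4*(n:ℝ)^2))
            ≤ (8 * (|t| + |t|^3)) * (1 / (4*(n:ℝ)^2)) :=
            mul_le_mul hK hcb (by positivity) (by positivity)
        _ = 8 * (|t| + |t|^3) / (4*(n:ℝ)^2) := by ring
    linarith
  -- final assembly
  have habs : |(2:ℝ)/Real.pi| = 2/Real.pi := abs_of_pos (by positivity)
  have hcongr : (∫ σ in (-Real.pi)..Real.pi,
      Real.cos (2*σ*(n:ℝ)) * Real.sin (2*t*Real.sin σ) * Real.sin σ)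
      = ∫ σ in (-Real.pi)..Real.pi, Kf t σ * Real.cos (2*σ*(n:ℝ)) :=
    intervalIntegral.integral_congr (fun σ _ => integrand_eq n t σ)
  unfold G1fun
  rw [hcongr, key, abs_mul, habs]
  refine le_trans (mul_le_mul_of_nonneg_left hpibd (by positivity)) (le_of_eq ?_)
  field_simp
  ring

lemma G1_bound (n : ℤ) (t : ℝ) : |G1fun n t| ≤ 8 * (|t| + |t|^3) * wfun n := by
  rcases eq_or_ne n 0 with rfl | hn
  · have hw : wfun 0 = 1 := by simp [wfun]
    rw [hw, mul_one]
    have h1 := abs_t_le t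
    linarith [G1_bound_zero t]
  · have hw : wfun n = 1/(n:ℝ)^2 := by simp [wfun, hn]
    rw [hw]
    calc |G1fun n t| ≤ 8 * (|t| + |t|^3) / (n:ℝ)^2 := G1_bound_ne n hn t
    _ = 8 * (|t| + |t|^3) * (1/(n:ℝ)^2) := by ring

lemma wfun_summable : Summable wfun := by
  have h1 : Summable (fun n : ℤ => 1/(n:ℝ)^2) := by
    rw [Real.summable_one_div_int_pow]; norm_num
  have h2 : Summable (fun n : ℤ => if n = 0 then (1:ℝ) else 0) := by
    apply summable_of_ne_finset_zero (s := ({0} : Finset ℤ))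
    intro n hn
    simp only [Finset.mem_singleton] at hn
    simp [hn]
  have heq : wfun = fun n : ℤ => (if n = 0 then (1:ℝ) else 0) + 1/(n:ℝ)^2 := by
    funext n
    by_cases h : n = 0
    · subst h; simp [wfun]
    · simp [wfun, h]
  rw [heq]
  exact h2.add h1

noncomputable def Wc : ℝ := ∑' n : ℤ, wfun n

lemma Wc_ge_one : 1 ≤ Wc := by
  have h := Summable.le_tsum wfun_summable 0 (fun j _ => wfun_nonneg j)
  have h0 : wfun 0 = 1 := by simp [wfun]
  rw [h0] at h
  exact h

lemma Wc_pos : 0 < Wc := lt_of_lt_of_le one_pos Wc_ge_one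

lemma wfun_shift_summable (n : ℤ) : Summable (fun m : ℤ => wfun (n - m)) :=
  ((Equiv.subLeft n).summable_iff (f := wfun)).mpr wfun_summable

lemma wfun_shift_tsum (n : ℤ) : (∑' m : ℤ, wfun (n - m)) = Wc :=
  (Equiv.subLeft n).tsum_eq wfun

lemma wfun_shift_summable' (m : ℤ) : Summable (fun n : ℤ => wfun (n - m)) :=
  ((Equiv.subRight m).summable_iff (f := wfun)).mpr wfun_summable

lemma wfun_shift_tsum' (m : ℤ) : (∑' n : ℤ, wfun (n - m)) = Wc :=
  (Equiv.subRight m).tsum_eq wfun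

lemma G1_continuous (k : ℤ) : Continuous (fun t => G1fun k t) := by
  unfold G1fun
  apply continuous_const.mul
  exact intervalIntegral.continuous_parametric_intervalIntegral_of_continuous'
    (μ := MeasureTheory.volume)
    (f := fun t σ => Real.cos (2 * σ * (k : ℝ)) * Real.sin (2 * t * Real.sin σ) * Real.sin σ)
    (by fun_prop) _ _

lemma master (p : ℕ) (hp : 2 ≤ p) (T : ℝ) (hT : 0 < T) (M : ℝ) (hM : 0 < M)
    (α : ℤ → ℝ → ℝ) (hcont : ∀ n : ℤ, ContinuousOn (α n) (Ico 0 T))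
    (hsum : ∀ t ∈ Ico (0:ℝ) T, Summable (fun n : ℤ => (α n t) ^ 2) ∧
      (∑' n : ℤ, (α n t) ^ 2) ≤ M ^ 2)
    (t : ℝ) (ht : t ∈ Ico (0:ℝ) T) :
    (∀ n : ℤ, Summable (fun m : ℤ =>
        |∫ s in (0:ℝ)..t, G1fun (n - m) (t - s) * (α m s) ^ p|)) ∧
    Summable (fun n : ℤ =>
        (∑' m : ℤ, ∫ s in (0:ℝ)..t, G1fun (n - m) (t - s) * (α m s) ^ p) ^ 2) ∧
    (∑' n : ℤ, (∑' m : ℤ, ∫ s in (0:ℝ)..t, G1fun (n - m) (t - s) * (α m s) ^ p) ^ 2)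
      ≤ 64 * Wc^2 * M ^ (2*p) * (t^2 + t^4)^2 := by
  obtain ⟨ht0, htT⟩ := ht
  have hIccsub : Icc (0:ℝ) t ⊆ Ico (0:ℝ) T := fun s hs => ⟨hs.1, lt_of_le_of_lt hs.2 htT⟩
  have huIcc : uIcc (0:ℝ) t = Icc 0 t := uIcc_of_le ht0
  have hαbd : ∀ m : ℤ, ∀ s ∈ Icc (0:ℝ) t, |α m s| ≤ M := by
    intro m s hs
    obtain ⟨hs1, hs2⟩ := hsum s (hIccsub hs)
    have h1 : (α m s)^2 ≤ M^2 := le_trans (Summable.le_tsum hs1 m (fun j _ => sq_nonneg _)) hs2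
    nlinarith [abs_nonneg (α m s), sq_abs (α m s)]
  have hαcont : ∀ m : ℤ, ContinuousOn (α m) (Icc 0 t) := fun m => (hcont m).mono hIccsub
  have hGcont : ∀ k : ℤ, Continuous (fun s : ℝ => G1fun k (t - s)) := fun k =>
    (G1_continuous k).comp (continuous_const.sub continuous_id)
  have hInt : ∀ n m : ℤ, IntervalIntegrable (fun s => G1fun (n-m) (t-s) * (α m s)^p)
      MeasureTheory.volume 0 t := by
    intro n m
    apply ContinuousOn.intervalIntegrable
    rw [huIcc]
    exact ((hGcont (n-m)).continuousOn).mul ((hαcont m).pow p)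
  have hIntAbsα : ∀ m : ℤ, IntervalIntegrable (fun s => |α m s|^p)
      MeasureTheory.volume 0 t := by
    intro m
    apply ContinuousOn.intervalIntegrable
    rw [huIcc]
    exact ((hαcont m).abs).pow p
  have hIntSq : ∀ m : ℤ, IntervalIntegrable (fun s => (α m s)^2)
      MeasureTheory.volume 0 t := by
    intro m
    apply ContinuousOn.intervalIntegrable
    rw [huIcc]
    exact (hαcont m).pow 2
  set B : ℤ → ℝ := fun m => ∫ s in (0:ℝ)..t, |α m s|^p with hBdef
  set D : ℤ → ℝ := fun m => ∫ s in (0:ℝ)..t, (α m s)^2 with hDdef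
  have hB0 : ∀ m, 0 ≤ B m := fun m =>
    intervalIntegral.integral_nonneg ht0 (fun s _ => by positivity)
  have hD0 : ∀ m, 0 ≤ D m := fun m =>
    intervalIntegral.integral_nonneg ht0 (fun s _ => sq_nonneg _)
  have hDle : ∀ m, D m ≤ t * M^2 := by
    intro m
    have h2 := intervalIntegral.integral_mono_on ht0 (hIntSq m) intervalIntegrable_const
      (fun s hs => le_trans (Summable.le_tsum (hsum s (hIccsub hs)).1 m (fun j _ => sq_nonneg _))
        (hsum s (hIccsub hs)).2)
    calc D m ≤ ∫ _ in (0:ℝ)..t, M^2 := h2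
    _ = t * M^2 := by rw [intervalIntegral.integral_const, smul_eq_mul, sub_zero]
  have hBle : ∀ m, B m ≤ M^(p-2) * D m := by
    intro m
    have key : ∀ s ∈ Icc (0:ℝ) t, |α m s|^p ≤ M^(p-2) * (α m s)^2 := by
      intro s hs
      have h1 : |α m s|^p = |α m s|^(p-2) * |α m s|^2 := by
        rw [← pow_add]; congr 1; omega
      rw [h1, sq_abs]
      exact mul_le_mul_of_nonneg_right
        (pow_le_pow_left₀ (abs_nonneg _) (hαbd m s hs) _) (sq_nonneg _)
    have h2 := intervalIntegral.integral_mono_on ht0 (hIntAbsα m)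
      ((hIntSq m).const_mul (M^(p-2))) key
    calc B m ≤ ∫ s in (0:ℝ)..t, M^(p-2) * (α m s)^2 := h2
    _ = M^(p-2) * D m := intervalIntegral.integral_const_mul _ _
  have hBmax : ∀ m, B m ≤ M^(p-2) * (t * M^2) := fun m =>
    le_trans (hBle m) (mul_le_mul_of_nonneg_left (hDle m) (by positivity))
  have hDsum_part : ∀ F : Finset ℤ, ∑ m ∈ F, D m ≤ t * M^2 := by
    intro F
    have h1 : ∑ m ∈ F, D m = ∫ s in (0:ℝ)..t, ∑ m ∈ F, (α m s)^2 :=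
      (intervalIntegral.integral_finset_sum (fun m _ => hIntSq m)).symm
    rw [h1]
    have hsint : IntervalIntegrable (fun s => ∑ m ∈ F, (α m s)^2)
        MeasureTheory.volume 0 t := by
      apply ContinuousOn.intervalIntegrable
      rw [huIcc]
      apply continuousOn_finset_sum
      intro i _
      exact (hαcont i).pow 2
    have h2 := intervalIntegral.integral_mono_on ht0 hsint intervalIntegrable_const
      (fun s hs => le_trans (Summable.sum_le_tsum F (fun j _ => sq_nonneg _) (hsum s (hIccsub hs)).1)
        (hsum s (hIccsub hs)).2)
    calc (∫ s in (0:ℝ)..t, ∑ m ∈ F, (α m s)^2) ≤ ∫ _ in (0:ℝ)..t, M^2 := h2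
    _ = t * M^2 := by rw [intervalIntegral.integral_const, smul_eq_mul, sub_zero]
  have hDsummable : Summable D := summable_of_sum_le (fun m => hD0 m) hDsum_part
  have hDtsum : (∑' m, D m) ≤ t * M^2 := Summable.tsum_le_of_sum_le hDsummable hDsum_part
  have hBsqle : ∀ m, B m^2 ≤ (M^(p-2))^2 * (t*M^2) * D m := by
    intro m
    calc B m^2 ≤ (M^(p-2) * D m)^2 := pow_le_pow_left₀ (hB0 m) (hBle m) 2
    _ = ((M^(p-2))^2 * D m) * D m := by ring
    _ ≤ ((M^(p-2))^2 * (t*M^2)) * D m := by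
        apply mul_le_mul_of_nonneg_right _ (hD0 m)
        exact mul_le_mul_of_nonneg_left (hDle m) (by positivity)
  have hBsqsummable : Summable (fun m => B m^2) :=
    Summable.of_nonneg_of_le (fun m => sq_nonneg _) hBsqle (hDsummable.mul_left _)
  have hSBle : (∑' m, B m^2) ≤ t^2 * M^(2*p) := by
    have h1 : (∑' m, B m^2) ≤ (M^(p-2))^2 * (t*M^2) * (t*M^2) := by
      calc (∑' m, B m^2) ≤ ∑' m, (M^(p-2))^2*(t*M^2)*D m :=
        Summable.tsum_le_tsum hBsqle hBsqsummable (hDsummable.mul_left _)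
      _ = (M^(p-2))^2*(t*M^2) * ∑' m, D m := tsum_mul_left
      _ ≤ (M^(p-2))^2*(t*M^2)*(t*M^2) :=
        mul_le_mul_of_nonneg_left hDtsum (by positivity)
    refine le_trans h1 (le_of_eq ?_)
    have hexp : (p-2)*2 + (2 + 2) = 2*p := by omega
    calc (M^(p-2))^2 * (t*M^2)*(t*M^2) = t^2 * M^((p-2)*2 + (2+2)) := by
          rw [← pow_mul, pow_add, pow_add]; ring
    _ = t^2 * M^(2*p) := by rw [hexp]
  have hIbound : ∀ n m : ℤ, |∫ s in (0:ℝ)..t, G1fun (n-m) (t-s) * (α m s)^p|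
      ≤ (8*(t+t^3)) * (wfun (n-m) * B m) := by
    intro n m
    have h1 := intervalIntegral.abs_integral_le_integral_abs (μ := MeasureTheory.volume)
      (f := fun s => G1fun (n-m) (t-s) * (α m s)^p) ht0
    have hptw : ∀ s ∈ Icc (0:ℝ) t,
        |G1fun (n-m) (t-s) * (α m s)^p| ≤ (8*(t+t^3)*wfun (n-m)) * |α m s|^p := by
      intro s hs
      rw [abs_mul, abs_pow]
      apply mul_le_mul_of_nonneg_right _ (by positivity)
      calc |G1fun (n-m) (t-s)| ≤ 8*(|t-s|+|t-s|^3) * wfun (n-m) := G1_bound _ _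
      _ ≤ 8*(t+t^3) * wfun (n-m) := by
          apply mul_le_mul_of_nonneg_right _ (wfun_nonneg _)
          have h2 : |t-s| ≤ t := by
            rw [abs_of_nonneg (by linarith [hs.2] : (0:ℝ) ≤ t - s)]; linarith [hs.1]
          have h3 : |t-s|^3 ≤ t^3 := pow_le_pow_left₀ (abs_nonneg _) h2 3
          linarith
    have h2 := intervalIntegral.integral_mono_on ht0 (hInt n m).abs
      ((hIntAbsα m).const_mul (8*(t+t^3)*wfun (n-m))) hptw
    have h3 : (∫ s in (0:ℝ)..t, (8*(t+t^3)*wfun (n-m)) * |α m s|^p)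
        = (8*(t+t^3)*wfun (n-m)) * B m := intervalIntegral.integral_const_mul _ _
    calc |∫ s in (0:ℝ)..t, G1fun (n-m) (t-s) * (α m s)^p|
        ≤ ∫ s in (0:ℝ)..t, |G1fun (n-m) (t-s) * (α m s)^p| := h1
    _ ≤ ∫ s in (0:ℝ)..t, (8*(t+t^3)*wfun (n-m)) * |α m s|^p := h2
    _ = (8*(t+t^3)*wfun (n-m)) * B m := h3
    _ = (8*(t+t^3)) * (wfun (n-m) * B m) := by ring
  have hconvSummable : ∀ n : ℤ, Summable (fun m => wfun (n-m) * B m) := by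
    intro n
    apply Summable.of_nonneg_of_le (fun m => mul_nonneg (wfun_nonneg _) (hB0 m))
      (fun m => mul_le_mul_of_nonneg_left (hBmax m) (wfun_nonneg _))
      ((wfun_shift_summable n).mul_right _)
  have hconj1 : ∀ n : ℤ, Summable (fun m : ℤ =>
      |∫ s in (0:ℝ)..t, G1fun (n - m) (t - s) * (α m s) ^ p|) := by
    intro n
    exact Summable.of_nonneg_of_le (fun m => abs_nonneg _) (hIbound n)
      ((hconvSummable n).mul_left _)
  set cfun : ℤ → ℝ := fun n => ∑' m, wfun (n-m) * B m with hcdef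
  set efun : ℤ → ℝ := fun n => ∑' m, wfun (n-m) * B m^2 with hedef
  have hBsqmax : ∀ m, B m^2 ≤ (M^(p-2) * (t*M^2))^2 := fun m =>
    pow_le_pow_left₀ (hB0 m) (hBmax m) 2
  have heSummable : ∀ n : ℤ, Summable (fun m => wfun (n-m) * B m^2) := by
    intro n
    apply Summable.of_nonneg_of_le (fun m => mul_nonneg (wfun_nonneg _) (sq_nonneg _))
      (fun m => mul_le_mul_of_nonneg_left (hBsqmax m) (wfun_nonneg _))
      ((wfun_shift_summable n).mul_right _)
  have hc0 : ∀ n, 0 ≤ cfun n := fun n =>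
    tsum_nonneg (fun m => mul_nonneg (wfun_nonneg _) (hB0 m))
  have he0 : ∀ n, 0 ≤ efun n := fun n =>
    tsum_nonneg (fun m => mul_nonneg (wfun_nonneg _) (sq_nonneg _))
  have hcsq : ∀ n, cfun n ^2 ≤ Wc * efun n := by
    intro n
    have hcle : cfun n ≤ Real.sqrt (Wc * efun n) := by
      apply Summable.tsum_le_of_sum_le (hconvSummable n)
      intro F
      rw [Real.le_sqrt (Finset.sum_nonneg (fun m _ => mul_nonneg (wfun_nonneg _) (hB0 m)))
        (mul_nonneg Wc_pos.le (he0 n))]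
      calc (∑ m ∈ F, wfun (n-m) * B m)^2
          = (∑ m ∈ F, Real.sqrt (wfun (n-m)) * (Real.sqrt (wfun (n-m)) * B m))^2 := by
            congr 1
            apply Finset.sum_congr rfl
            intro m _
            rw [← mul_assoc, Real.mul_self_sqrt (wfun_nonneg _)]
      _ ≤ (∑ m ∈ F, Real.sqrt (wfun (n-m))^2) * (∑ m ∈ F, (Real.sqrt (wfun (n-m)) * B m)^2) :=
            Finset.sum_mul_sq_le_sq_mul_sq F _ _
      _ = (∑ m ∈ F, wfun (n-m)) * (∑ m ∈ F, wfun (n-m) * B m^2) := by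
            congr 1
            · apply Finset.sum_congr rfl; intro m _; exact Real.sq_sqrt (wfun_nonneg _)
            · apply Finset.sum_congr rfl; intro m _
              rw [mul_pow, Real.sq_sqrt (wfun_nonneg _)]
      _ ≤ Wc * efun n := by
            apply mul_le_mul _ _ (Finset.sum_nonneg (fun m _ =>
              mul_nonneg (wfun_nonneg _) (sq_nonneg _))) Wc_pos.le
            · exact le_trans (Summable.sum_le_tsum F (fun j _ => wfun_nonneg _) (wfun_shift_summable n))
                (le_of_eq (wfun_shift_tsum n))
            · exact Summable.sum_le_tsum F (fun j _ => mul_nonneg (wfun_nonneg _) (sq_nonneg _))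
                (heSummable n)
    calc cfun n^2 ≤ Real.sqrt (Wc * efun n)^2 := pow_le_pow_left₀ (hc0 n) hcle 2
    _ = Wc * efun n := Real.sq_sqrt (mul_nonneg Wc_pos.le (he0 n))
  have hepart : ∀ S : Finset ℤ, ∑ n ∈ S, efun n ≤ Wc * ∑' m, B m^2 := by
    intro S
    have h1 : ∑ n ∈ S, efun n = ∑' m, ∑ n ∈ S, wfun (n-m) * B m^2 :=
      (Summable.tsum_finsetSum (fun n _ => heSummable n)).symm
    rw [h1, ← tsum_mul_left]
    have hlhs : Summable (fun m => ∑ n ∈ S, wfun (n-m) * B m^2) :=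
      summable_sum (fun n _ => heSummable n)
    apply Summable.tsum_le_tsum _ hlhs (hBsqsummable.mul_left Wc)
    intro m
    calc ∑ n ∈ S, wfun (n-m) * B m^2 = (∑ n ∈ S, wfun (n-m)) * B m^2 :=
          (Finset.sum_mul _ _ _).symm
    _ ≤ Wc * B m^2 := by
          apply mul_le_mul_of_nonneg_right _ (sq_nonneg _)
          exact le_trans (Summable.sum_le_tsum S (fun j _ => wfun_nonneg _) (wfun_shift_summable' m))
            (le_of_eq (wfun_shift_tsum' m))
  have heSummable2 : Summable efun := summable_of_sum_le (fun n => he0 n) hepart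
  have hetsum : (∑' n, efun n) ≤ Wc * ∑' m, B m^2 := Summable.tsum_le_of_sum_le heSummable2 hepart
  have hcsqSummable : Summable (fun n => cfun n^2) :=
    Summable.of_nonneg_of_le (fun n => sq_nonneg _) hcsq (heSummable2.mul_left Wc)
  have hcsqtsum : (∑' n, cfun n^2) ≤ Wc^2 * ∑' m, B m^2 := by
    calc (∑' n, cfun n^2) ≤ ∑' n, Wc * efun n :=
      Summable.tsum_le_tsum hcsq hcsqSummable (heSummable2.mul_left Wc)
    _ = Wc * ∑' n, efun n := tsum_mul_left
    _ ≤ Wc * (Wc * ∑' m, B m^2) := mul_le_mul_of_nonneg_left hetsum Wc_pos.le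
    _ = Wc^2 * ∑' m, B m^2 := by ring
  have hFbound : ∀ n : ℤ, |∑' m : ℤ, ∫ s in (0:ℝ)..t, G1fun (n - m) (t - s) * (α m s) ^ p|
      ≤ 8*(t+t^3) * cfun n := by
    intro n
    have habs : |∑' m : ℤ, ∫ s in (0:ℝ)..t, G1fun (n - m) (t - s) * (α m s) ^ p|
        ≤ ∑' m : ℤ, |∫ s in (0:ℝ)..t, G1fun (n - m) (t - s) * (α m s) ^ p| := by
      have := norm_tsum_le_tsum_norm
        (f := fun m : ℤ => ∫ s in (0:ℝ)..t, G1fun (n - m) (t - s) * (α m s) ^ p)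
        (by simpa [Real.norm_eq_abs] using hconj1 n)
      simpa [Real.norm_eq_abs] using this
    calc |∑' m : ℤ, ∫ s in (0:ℝ)..t, G1fun (n - m) (t - s) * (α m s) ^ p|
        ≤ ∑' m : ℤ, |∫ s in (0:ℝ)..t, G1fun (n - m) (t - s) * (α m s) ^ p| := habs
    _ ≤ ∑' m : ℤ, (8*(t+t^3)) * (wfun (n-m) * B m) :=
        Summable.tsum_le_tsum (hIbound n) (hconj1 n) ((hconvSummable n).mul_left _)
    _ = 8*(t+t^3) * cfun n := tsum_mul_left
  have hFsq : ∀ n : ℤ, (∑' m : ℤ, ∫ s in (0:ℝ)..t, G1fun (n - m) (t - s) * (α m s) ^ p)^2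
      ≤ 64*(t+t^3)^2 * cfun n^2 := by
    intro n
    calc (∑' m : ℤ, ∫ s in (0:ℝ)..t, G1fun (n - m) (t - s) * (α m s) ^ p)^2
        = |∑' m : ℤ, ∫ s in (0:ℝ)..t, G1fun (n - m) (t - s) * (α m s) ^ p|^2 :=
          (sq_abs _).symm
    _ ≤ (8*(t+t^3) * cfun n)^2 := pow_le_pow_left₀ (abs_nonneg _) (hFbound n) 2
    _ = 64*(t+t^3)^2 * cfun n^2 := by ring
  have hFsqSummable : Summable (fun n : ℤ =>
      (∑' m : ℤ, ∫ s in (0:ℝ)..t, G1fun (n - m) (t - s) * (α m s) ^ p)^2) :=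
    Summable.of_nonneg_of_le (fun n => sq_nonneg _) hFsq (hcsqSummable.mul_left _)
  refine ⟨hconj1, hFsqSummable, ?_⟩
  calc (∑' n : ℤ, (∑' m : ℤ, ∫ s in (0:ℝ)..t, G1fun (n - m) (t - s) * (α m s) ^ p)^2)
      ≤ ∑' n : ℤ, 64*(t+t^3)^2 * cfun n^2 :=
        Summable.tsum_le_tsum hFsq hFsqSummable (hcsqSummable.mul_left _)
  _ = 64*(t+t^3)^2 * ∑' n, cfun n^2 := tsum_mul_left
  _ ≤ 64*(t+t^3)^2 * (Wc^2 * ∑' m, B m^2) :=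
        mul_le_mul_of_nonneg_left hcsqtsum (by positivity)
  _ ≤ 64*(t+t^3)^2 * (Wc^2 * (t^2 * M^(2*p))) := by
        apply mul_le_mul_of_nonneg_left _ (by positivity)
        exact mul_le_mul_of_nonneg_left hSBle (by positivity)
  _ = 64 * Wc^2 * M^(2*p) * (t^2 + t^4)^2 := by ring


/-- potential-energy estimate for the Duhamel term: there is `C = C(p) > 0`
such that for every `T > 0`, `M > 0` and family `α` with `sup_{0≤t<T} Σ_n α_n(t)² ≤ M²`,
the double series `Σ_m ∫₀ᵗ G₁(n-m,t-s) α_m(s)^p ds` converges absolutely and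
`sup_{0≤t<T} Σ_n (Σ_m ∫₀ᵗ G₁(n-m,t-s) α_m(s)^p ds)² ≤ C M^{2p} (T²+T⁴)²`. -/
theorem duhamel_potential_energy_bound (p : ℕ) (hp : 2 ≤ p) : ∃ C : ℝ, 0 < C ∧
    ∀ T : ℝ, 0 < T → ∀ M : ℝ, 0 < M → ∀ α : ℤ → ℝ → ℝ,
      (∀ n : ℤ, ContinuousOn (α n) (Ico 0 T)) →
      (∀ t ∈ Ico (0 : ℝ) T, Summable (fun n : ℤ => (α n t) ^ 2) ∧
        (∑' n : ℤ, (α n t) ^ 2) ≤ M ^ 2) →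
      (∀ n : ℤ, ∀ t ∈ Ico (0 : ℝ) T,
        Summable (fun m : ℤ => |∫ s in (0 : ℝ)..t, G1fun (n - m) (t - s) * (α m s) ^ p|)) ∧
      ∀ t ∈ Ico (0 : ℝ) T,
        Summable (fun n : ℤ =>
          (∑' m : ℤ, ∫ s in (0 : ℝ)..t, G1fun (n - m) (t - s) * (α m s) ^ p) ^ 2) ∧
        (∑' n : ℤ,
            (∑' m : ℤ, ∫ s in (0 : ℝ)..t, G1fun (n - m) (t - s) * (α m s) ^ p) ^ 2)
          ≤ C * M ^ (2 * p) * (T ^ 2 + T ^ 4) ^ 2 := by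

  refine ⟨64 * Wc^2, by nlinarith [Wc_pos, sq_nonneg Wc], ?_⟩
  intro T hT M hM α hcont hsum
  constructor
  · intro n t ht
    exact (master p hp T hT M hM α hcont hsum t ht).1 n
  · intro t ht
    obtain ⟨h1, h2, h3⟩ := master p hp T hT M hM α hcont hsum t ht
    refine ⟨h2, le_trans h3 ?_⟩
    have ht0 : (0:ℝ) ≤ t := ht.1
    have htT : t ≤ T := ht.2.le
    have h4 : t^2 + t^4 ≤ T^2 + T^4 := by
      have e2 := pow_le_pow_left₀ ht0 htT 2
      have e4 := pow_le_pow_left₀ ht0 htT 4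
      linarith
    have h5 : (t^2+t^4)^2 ≤ (T^2+T^4)^2 := pow_le_pow_left₀ (by positivity) h4 2
    calc 64 * Wc^2 * M^(2*p) * (t^2+t^4)^2 ≤ 64 * Wc^2 * M^(2*p) * (T^2+T^4)^2 := by
          apply mul_le_mul_of_nonneg_left h5 (by positivity)
    _ = 64 * Wc^2 * M^(2*p) * (T^2+T^4)^2 := rfl
end

section
/- Let χ > 0, T > 0, and let α = (α_n)_{n∈ℤ} be a family of C² real functions on [0,T) with finite energy solving the sine-Gordon lattice equation α̈_n(t) = Δα_n(t) + χ·Δ(sin α_n(t)) for all n ∈ ℤ and t ∈ [0,T). Define E(t) = Σ_{n∈ℤ} [ (1/2)(Σ_{m≤n−1} α̇_m(t))² + (1/2)α_n(t)² + χ·(1 − cos α_n(t)) ]. Assume that the series defining E(t) converges for each t ∈ [0,T), and that this series as well as the series of its term-wise time derivatives converge locally uniformly on [0,T). Then E(t) = E(0) for all t ∈ [0,T). -/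
open Set Filter
open MeasureTheory intervalIntegral Topology

section SGHelpers

noncomputable def sgEquiv (n : ℤ) : ℕ ≃ {m : ℤ // m ≤ n - 1} where
  toFun k := ⟨n - 1 - (k : ℤ), by omega⟩
  invFun m := (n - 1 - m.1).toNat
  left_inv k := by simp only []; omega
  right_inv m := by ext; simp only []; have := m.2; omega

lemma sg_tailSum_eq (f : ℤ → ℝ) (n : ℤ) : tailSum f n = ∑' k : ℕ, f (n - 1 - k) :=
  ((sgEquiv n).tsum_eq (fun m : {m : ℤ // m ≤ n - 1} => f m.1)).symm

lemma sg_tailSummable_iff (f : ℤ → ℝ) (n : ℤ) :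
    TailSummable f n ↔ Summable (fun k : ℕ => f (n - 1 - k)) :=
  ((sgEquiv n).summable_iff (f := fun m : {m : ℤ // m ≤ n - 1} => f m.1)).symm

lemma sg_tailSum_succ {f : ℤ → ℝ} {n : ℤ} (h : TailSummable f (n + 1)) :
    tailSum f (n + 1) = f n + tailSum f n := by
  have h2 : Summable (fun k : ℕ => f (n + 1 - 1 - k)) := (sg_tailSummable_iff f (n + 1)).1 h
  have e1 : (fun k : ℕ => f (n + 1 - 1 - k)) = fun k : ℕ => f (n - k) := by
    funext k; congr 1; ring
  rw [e1] at h2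
  have e2 : (fun k : ℕ => f (n - ((k : ℕ) + 1 : ℕ))) = fun k : ℕ => f (n - 1 - k) := by
    funext k; congr 1; push_cast; ring
  calc tailSum f (n + 1) = ∑' k : ℕ, f (n + 1 - 1 - k) := sg_tailSum_eq f (n + 1)
    _ = ∑' k : ℕ, f (n - k) := by rw [e1]
    _ = f (n - (0 : ℕ)) + ∑' k : ℕ, f (n - ((k : ℕ) + 1 : ℕ)) := by
        exact_mod_cast Summable.tsum_eq_zero_add h2
    _ = f n + tailSum f n := by rw [e2, ← sg_tailSum_eq]; norm_num

lemma sg_hasDeriv_S (χ T : ℝ) (hχ : 0 < χ) (hT : 0 < T) (α : ℤ → ℝ → ℝ)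
    (hC2 : ∀ n : ℤ, ContDiffOn ℝ 2 (α n) (Ico 0 T))
    (hE : FiniteEnergyOn α (Ico 0 T) T)
    (hsol : SolvesSG χ α (Ico 0 T)) (n : ℤ) {t₀ : ℝ} (h0 : t₀ ∈ Ico (0:ℝ) T) :
    HasDerivWithinAt (fun τ => tailSum (fun m => derivWithin (α m) (Ico 0 T) τ) n)
      ((α n t₀ + χ * Real.sin (α n t₀)) - (α (n - 1) t₀ + χ * Real.sin (α (n - 1) t₀)))
      (Ico 0 T) t₀ := by
  obtain ⟨htail, M, hM⟩ := hE
  set I : Set ℝ := Ico (0:ℝ) T with hIdef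
  have hUD : UniqueDiffOn ℝ I := uniqueDiffOn_Ico 0 T
  set D : ℤ → ℝ → ℝ := fun k τ =>
    (α k τ + χ * Real.sin (α k τ)) - (α (k - 1) τ + χ * Real.sin (α (k - 1) τ)) with hDdef
  -- regularity
  have hvC1 : ∀ m : ℤ, ContDiffOn ℝ 1 (derivWithin (α m) I) I :=
    fun m => (hC2 m).derivWithin hUD (by norm_num)
  have hvcont : ∀ m : ℤ, ContinuousOn (derivWithin (α m) I) I := fun m => (hvC1 m).continuousOn
  have hwcont : ∀ m : ℤ, ContinuousOn (derivWithin (derivWithin (α m) I) I) I :=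
    fun m => (ContDiffOn.derivWithin (m := 0) (hvC1 m) hUD (by norm_num)).continuousOn
  have hacont : ∀ m : ℤ, ContinuousOn (α m) I := fun m => (hC2 m).continuousOn
  have hFcont : ∀ k : ℤ, ContinuousOn (fun τ => α k τ + χ * Real.sin (α k τ)) I :=
    fun k => (hacont k).add
      (continuousOn_const.mul (Real.continuous_sin.comp_continuousOn (hacont k)))
  have hDcont : ∀ k : ℤ, ContinuousOn (D k) I := fun k => (hFcont k).sub (hFcont (k - 1))
  -- FTC part 2 on I
  have hftc : ∀ m : ℤ, ∀ a ∈ I, ∀ b ∈ I,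
      (∫ σ in a..b, derivWithin (derivWithin (α m) I) I σ)
        = derivWithin (α m) I b - derivWithin (α m) I a := by
    have key : ∀ m : ℤ, ∀ a b : ℝ, a ∈ I → b ∈ I → a ≤ b →
        (∫ σ in a..b, derivWithin (derivWithin (α m) I) I σ)
          = derivWithin (α m) I b - derivWithin (α m) I a := by
      intro m a b ha hb hab
      have hIcc : Icc a b ⊆ I := fun x hx => ⟨le_trans ha.1 hx.1, lt_of_le_of_lt hx.2 hb.2⟩
      refine integral_eq_sub_of_hasDeriv_right_of_le hab ((hvcont m).mono hIcc)
        (fun x hx => ?_)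
        (((hwcont m).mono (by rw [Set.uIcc_of_le hab]; exact hIcc)).intervalIntegrable)
      have hxI : x ∈ I := hIcc ⟨hx.1.le, hx.2.le⟩
      have hnhds : I ∈ 𝓝 x := mem_nhds_iff.mpr
        ⟨Ioo 0 T, Ioo_subset_Ico_self, isOpen_Ioo, ⟨lt_of_le_of_lt ha.1 hx.1, lt_trans hx.2 hb.2⟩⟩
      exact ((((hvC1 m).differentiableOn one_ne_zero) x hxI).hasDerivWithinAt.hasDerivAt
        hnhds).hasDerivWithinAt
    intro m a ha b hb
    rcases le_total a b with h | h
    · exact key m a b ha hb h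
    · rw [integral_symm, key m b a hb ha h]; ring
  -- uniform bound
  have hbound : ∀ k : ℤ, ∀ x ∈ I, |α k x + χ * Real.sin (α k x)| ≤ Real.sqrt M + χ := by
    intro k x hx
    obtain ⟨hS2, ha2, hle⟩ := hM x hx
    have h1 : (α k x) ^ 2 ≤ M := by
      have h2 := Summable.le_tsum ha2 k (fun j _ => sq_nonneg _)
      have h3 : (∑' j : ℤ, (α j x) ^ 2) ≤ M :=
        le_trans (le_add_of_nonneg_left (tsum_nonneg fun j => sq_nonneg _)) hle
      linarith
    have h2 : |α k x| ≤ Real.sqrt M := by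
      rw [← Real.sqrt_sq_eq_abs]; exact Real.sqrt_le_sqrt h1
    have h3 : |Real.sin (α k x)| ≤ 1 :=
      abs_le.mpr ⟨Real.neg_one_le_sin _, Real.sin_le_one _⟩
    calc |α k x + χ * Real.sin (α k x)| ≤ |α k x| + |χ * Real.sin (α k x)| := abs_add_le _ _
      _ ≤ Real.sqrt M + χ := by
          rw [abs_mul, abs_of_pos hχ]; nlinarith
  -- key integral identity
  have hkey : ∀ t₁ ∈ I, ∀ τ ∈ I,
      tailSum (fun m => derivWithin (α m) I τ) n - tailSum (fun m => derivWithin (α m) I t₁) n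
        = ∫ σ in t₁..τ, D n σ := by
    intro t₁ h1 τ hτ
    have huIcc : Set.uIcc t₁ τ ⊆ I := by
      intro x hx
      exact ⟨le_trans (le_min h1.1 hτ.1) hx.1, lt_of_le_of_lt hx.2 (max_lt h1.2 hτ.2)⟩
    have huIoc : Set.uIoc t₁ τ ⊆ I := fun x hx => huIcc (Set.Ioc_subset_Icc_self hx)
    have hsτ : Summable (fun k : ℕ => derivWithin (α (n - 1 - k)) I τ) :=
      (sg_tailSummable_iff (fun m => derivWithin (α m) I τ) n).1 (htail n τ hτ)
    have hst : Summable (fun k : ℕ => derivWithin (α (n - 1 - k)) I t₁) :=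
      (sg_tailSummable_iff (fun m => derivWithin (α m) I t₁) n).1 (htail n t₁ h1)
    have hsub : Summable (fun k : ℕ =>
        derivWithin (α (n - 1 - k)) I τ - derivWithin (α (n - 1 - k)) I t₁) := hsτ.sub hst
    have htsum : (∑' k : ℕ,
        (derivWithin (α (n - 1 - k)) I τ - derivWithin (α (n - 1 - k)) I t₁))
        = tailSum (fun m => derivWithin (α m) I τ) n
          - tailSum (fun m => derivWithin (α m) I t₁) n := by
      rw [Summable.tsum_sub hsτ hst, sg_tailSum_eq, sg_tailSum_eq]
    have hpartial := hsub.hasSum.tendsto_sum_nat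
    -- partial sums
    have hps : ∀ N : ℕ, (∑ k ∈ Finset.range N,
        (derivWithin (α (n - 1 - k)) I τ - derivWithin (α (n - 1 - k)) I t₁))
        = (∫ σ in t₁..τ, D n σ) - ∫ σ in t₁..τ, D (n - N) σ := by
      intro N
      have h1' : ∀ k ∈ Finset.range N,
          derivWithin (α (n - 1 - k)) I τ - derivWithin (α (n - 1 - k)) I t₁
            = ∫ σ in t₁..τ, derivWithin (derivWithin (α (n - 1 - k)) I) I σ :=
        fun k _ => (hftc (n - 1 - k) t₁ h1 τ hτ).symm
      rw [Finset.sum_congr rfl h1',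
        ← intervalIntegral.integral_finset_sum (fun k _ => ((hwcont _).mono huIcc).intervalIntegrable)]
      have h2 : (∫ σ in t₁..τ,
          (∑ k ∈ Finset.range N, derivWithin (derivWithin (α (n - 1 - k)) I) I σ))
          = ∫ σ in t₁..τ, (D n σ - D (n - N) σ) := by
        apply integral_congr
        intro σ hσ
        have hσI : σ ∈ I := huIcc hσ
        have heq : ∀ k : ℕ, derivWithin (derivWithin (α (n - 1 - k)) I) I σ
            = (fun k : ℕ => D (n - k) σ) k - (fun k : ℕ => D (n - k) σ) (k + 1) := by
          intro k
          have hsolk := hsol (n - 1 - k) σ hσI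
          rw [hsolk]
          simp only [hDdef, lap]
          have e1 : (n : ℤ) - 1 - k + 1 = n - k := by ring
          have e2 : (n : ℤ) - k - 1 = n - 1 - k := by ring
          have e3 : (n : ℤ) - ((k : ℕ) + 1 : ℕ) = n - 1 - k := by push_cast; ring
          rw [e1, e2, e3]
          ring
        simp only
        rw [Finset.sum_congr rfl (fun k _ => heq k),
          Finset.sum_range_sub' (fun k : ℕ => D (n - k) σ) N]
        norm_num
      rw [h2, intervalIntegral.integral_sub (((hDcont n).mono huIcc).intervalIntegrable)
        (((hDcont (n - N)).mono huIcc).intervalIntegrable)]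
    -- dominated convergence
    have hdct : Tendsto (fun N : ℕ => ∫ σ in t₁..τ, D (n - N) σ) atTop (𝓝 0) := by
      have h0' : (0 : ℝ) = ∫ σ in t₁..τ, (0 : ℝ) := by simp
      rw [h0']
      apply intervalIntegral.tendsto_integral_filter_of_dominated_convergence
        (bound := fun _ => 2 * (Real.sqrt M + χ))
      · exact Eventually.of_forall fun N =>
          (((hDcont (n - N)).mono huIoc).aestronglyMeasurable measurableSet_uIoc)
      · refine Eventually.of_forall fun N => ae_of_all _ fun x hx => ?_
        have hxI : x ∈ I := huIoc hx
        have hb1 := hbound (n - N) x hxI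
        have hb2 := hbound (n - N - 1) x hxI
        rw [Real.norm_eq_abs]
        simp only [hDdef]
        calc |(α (n - N) x + χ * Real.sin (α (n - N) x))
              - (α (n - N - 1) x + χ * Real.sin (α (n - N - 1) x))|
            ≤ |α (n - N) x + χ * Real.sin (α (n - N) x)|
              + |α (n - N - 1) x + χ * Real.sin (α (n - N - 1) x)| := abs_sub _ _
          _ ≤ 2 * (Real.sqrt M + χ) := by linarith
      · exact intervalIntegrable_const
      · refine ae_of_all _ fun x hx => ?_
        have hxI : x ∈ I := huIoc hx
        have hsum2 : Summable (fun m : ℤ => (α m x) ^ 2) := (hM x hxI).2.1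
        have h1' : Tendsto (fun m : ℤ => α m x) cofinite (𝓝 0) := by
          rw [tendsto_zero_iff_abs_tendsto_zero]
          have h2' := (Real.continuous_sqrt.tendsto 0).comp hsum2.tendsto_cofinite_zero
          simp only [Function.comp_def, Real.sqrt_sq_eq_abs, Real.sqrt_zero] at h2'
          exact h2'
        have hFlim : ∀ c : ℤ,
            Tendsto (fun N : ℕ => α (c - N) x + χ * Real.sin (α (c - N) x)) atTop (𝓝 0) := by
          intro c
          have hcb : Tendsto (fun N : ℕ => (c - N : ℤ)) atTop cofinite := by
            rw [Int.cofinite_eq]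
            apply Tendsto.mono_right _ le_sup_left
            simp only [sub_eq_add_neg]
            exact Filter.tendsto_atBot_add_const_left _ c
              (Filter.tendsto_neg_atBot_iff.mpr tendsto_natCast_atTop_atTop)
          have h3 : Tendsto (fun N : ℕ => α (c - N) x) atTop (𝓝 0) := h1'.comp hcb
          have h4 : Continuous (fun y : ℝ => y + χ * Real.sin y) := continuous_id.add (continuous_const.mul Real.continuous_sin)
          have h5 := (h4.tendsto 0).comp h3
          simpa [Function.comp_def] using h5
        have h6 := (hFlim n).sub (hFlim (n - 1))
        rw [sub_zero] at h6
        have e5 : (fun N : ℕ => D (n - N) x)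
            = fun N : ℕ => (α (n - N) x + χ * Real.sin (α (n - N) x))
              - (α (n - 1 - N) x + χ * Real.sin (α (n - 1 - N) x)) := by
          funext N
          simp only [hDdef]
          have : (n : ℤ) - N - 1 = n - 1 - N := by ring
          rw [this]
        rw [e5]
        exact h6
    have hlim2 : Tendsto (fun N : ℕ =>
        (∫ σ in t₁..τ, D n σ) - ∫ σ in t₁..τ, D (n - N) σ) atTop (𝓝 (∫ σ in t₁..τ, D n σ)) := by
      have h7 : Tendsto (fun _ : ℕ => (∫ σ in t₁..τ, D n σ)) atTop (𝓝 (∫ σ in t₁..τ, D n σ)) :=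
        tendsto_const_nhds
      have := h7.sub hdct
      simpa using this
    rw [← htsum]
    exact tendsto_nhds_unique (by rw [funext hps] at hpartial; exact hpartial) hlim2
  -- clamp and conclude
  have ht₀0 := h0.1
  have ht₀T := h0.2
  set b : ℝ := (t₀ + T) / 2 with hb
  have hbt : t₀ < b := by rw [hb]; linarith
  have hbT : b < T := by rw [hb]; linarith
  have hb0 : 0 < b := by rw [hb]; linarith
  have hIccI : Icc (0:ℝ) b ⊆ I := fun x hx => ⟨hx.1, lt_of_le_of_lt hx.2 hbT⟩
  set c : ℝ → ℝ := fun σ => max 0 (min σ b) with hc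
  have hccont : Continuous c := continuous_const.max (continuous_id.min continuous_const)
  have hcmem : ∀ σ, c σ ∈ Icc (0:ℝ) b :=
    fun σ => ⟨le_max_left _ _, max_le hb0.le (min_le_right _ _)⟩
  have hceq : ∀ σ ∈ Icc (0:ℝ) b, c σ = σ := by
    intro σ hσ
    rw [hc]; simp only []
    rw [min_eq_left hσ.2, max_eq_right hσ.1]
  have hDccont : Continuous (fun σ => D n (c σ)) :=
    ((hDcont n).mono hIccI).comp_continuous hccont hcmem
  have hg : HasDerivAt (fun u => ∫ σ in t₀..u, D n (c σ)) (D n (c t₀)) t₀ :=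
    integral_hasDerivAt_right (hDccont.intervalIntegrable _ _)
      (hDccont.stronglyMeasurableAtFilter _ _) hDccont.continuousAt
  have hct₀ : c t₀ = t₀ := hceq t₀ ⟨ht₀0, hbt.le⟩
  rw [hct₀] at hg
  have hg2 : HasDerivWithinAt
      (fun u => tailSum (fun m => derivWithin (α m) I t₀) n + ∫ σ in t₀..u, D n (c σ))
      (D n t₀) I t₀ := ((hg.const_add (tailSum (fun m => derivWithin (α m) I t₀) n)).hasDerivWithinAt)
  have hev : (fun τ => tailSum (fun m => derivWithin (α m) I τ) n)
      =ᶠ[nhdsWithin t₀ I]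
      (fun u => tailSum (fun m => derivWithin (α m) I t₀) n + ∫ σ in t₀..u, D n (c σ)) := by
    have hIio : Iio b ∈ nhdsWithin t₀ I := nhdsWithin_le_nhds (Iio_mem_nhds hbt)
    filter_upwards [hIio, self_mem_nhdsWithin] with τ hτb hτI
    have hsub2 : Set.uIcc t₀ τ ⊆ Icc (0:ℝ) b := by
      intro x hx
      exact ⟨le_trans (le_min ht₀0 hτI.1) hx.1, le_trans hx.2 (max_le hbt.le (le_of_lt hτb))⟩
    have hintc : (∫ σ in t₀..τ, D n (c σ)) = ∫ σ in t₀..τ, D n σ := by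
      apply integral_congr
      intro σ hσ
      simp only []
      rw [hceq σ (hsub2 hσ)]
    rw [hintc]
    have := hkey t₀ h0 τ hτI
    linarith
  have heq0 : (fun τ => tailSum (fun m => derivWithin (α m) I τ) n) t₀
      = tailSum (fun m => derivWithin (α m) I t₀) n + ∫ σ in t₀..t₀, D n (c σ) := by
    simp
  have final := hg2.congr_of_eventuallyEq hev heq0
  exact final

end SGHelpers

/-- conservation of the energy
`E(t) = Σ_n [ ½(Σ_{m≤n-1} α̇_m)² + ½α_n² + χ(1 - cos α_n) ]`
for a finite-energy solution of the sine-Gordon lattice, assuming the series defining `E`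
as well as the series of its term-wise time derivatives converge locally uniformly. -/
theorem sine_gordon_energy_conservation (χ T : ℝ) (hχ : 0 < χ) (hT : 0 < T)
    (α : ℤ → ℝ → ℝ)
    (hC2 : ∀ n : ℤ, ContDiffOn ℝ 2 (α n) (Ico 0 T))
    (hE : FiniteEnergyOn α (Ico 0 T) T)
    (hsol : SolvesSG χ α (Ico 0 T))
    (e : ℤ → ℝ → ℝ)
    (he : ∀ (n : ℤ) (t : ℝ),
      e n t = (1 / 2) * (tailSum (fun m => derivWithin (α m) (Ico 0 T) t) n) ^ 2
        + (1 / 2) * (α n t) ^ 2 + χ * (1 - Real.cos (α n t)))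
    (hconv : ∀ t ∈ Ico (0 : ℝ) T, Summable (fun n : ℤ => e n t))
    (hdiff : ∀ n : ℤ, DifferentiableOn ℝ (e n) (Ico 0 T))
    (hu1 : TendstoLocallyUniformlyOn (fun (s : Finset ℤ) (t : ℝ) => ∑ n ∈ s, e n t)
      (fun t => ∑' n : ℤ, e n t) atTop (Ico 0 T))
    (hu2 : TendstoLocallyUniformlyOn
      (fun (s : Finset ℤ) (t : ℝ) => ∑ n ∈ s, derivWithin (e n) (Ico 0 T) t)
      (fun t => ∑' n : ℤ, derivWithin (e n) (Ico 0 T) t) atTop (Ico 0 T)) :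
    ∀ t ∈ Ico (0 : ℝ) T, (∑' n : ℤ, e n t) = ∑' n : ℤ, e n 0 := by
  have hUD : UniqueDiffOn ℝ (Ico (0:ℝ) T) := uniqueDiffOn_Ico 0 T
  -- derivative of each energy term
  have heD : ∀ n : ℤ, ∀ t ∈ Ico (0:ℝ) T, derivWithin (e n) (Ico 0 T) t
      = (α n t + χ * Real.sin (α n t))
          * tailSum (fun m => derivWithin (α m) (Ico 0 T) t) (n + 1)
        - (α (n - 1) t + χ * Real.sin (α (n - 1) t))
          * tailSum (fun m => derivWithin (α m) (Ico 0 T) t) n := by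
    intro n t ht
    have hS := sg_hasDeriv_S χ T hχ hT α hC2 hE hsol n ht
    have ha : HasDerivWithinAt (α n) (derivWithin (α n) (Ico 0 T) t) (Ico 0 T) t :=
      (((hC2 n).differentiableOn (by norm_num)) t ht).hasDerivWithinAt
    have hefun : e n = fun τ => 1 / 2 * (tailSum (fun m => derivWithin (α m) (Ico 0 T) τ) n) ^ 2
        + 1 / 2 * (α n τ) ^ 2 + χ * (1 - Real.cos (α n τ)) := funext (he n)
    have hcomb : HasDerivWithinAt (e n)
        (1 / 2 * (((2:ℕ):ℝ) * (tailSum (fun m => derivWithin (α m) (Ico 0 T) t) n) ^ (2 - 1)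
            * ((α n t + χ * Real.sin (α n t)) - (α (n - 1) t + χ * Real.sin (α (n - 1) t))))
          + 1 / 2 * (((2:ℕ):ℝ) * (α n t) ^ (2 - 1) * derivWithin (α n) (Ico 0 T) t)
          + χ * (-(-Real.sin (α n t) * derivWithin (α n) (Ico 0 T) t)))
        (Ico 0 T) t := by
      rw [hefun]
      exact (((hS.pow 2).const_mul (1/2 : ℝ)).add ((ha.pow 2).const_mul (1/2 : ℝ))).add
        ((ha.cos.const_sub 1).const_mul χ)
    rw [hcomb.derivWithin (hUD t ht)]
    have hts : tailSum (fun m => derivWithin (α m) (Ico 0 T) t) (n + 1)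
        = derivWithin (α n) (Ico 0 T) t
          + tailSum (fun m => derivWithin (α m) (Ico 0 T) t) n :=
      sg_tailSum_succ (hE.1 (n + 1) t ht)
    rw [hts]
    push_cast
    ring
  -- the series of derivatives sums to zero
  have hgE : ∀ t ∈ Ico (0:ℝ) T, (∑' n : ℤ, derivWithin (e n) (Ico 0 T) t) = 0 := by
    intro t ht
    obtain ⟨M, hM⟩ := hE.2
    obtain ⟨hS2, ha2, hle⟩ := hM t ht
    set P : ℤ → ℝ := fun n => (α n t + χ * Real.sin (α n t))
      * tailSum (fun m => derivWithin (α m) (Ico 0 T) t) (n + 1) with hPdef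
    have hS2' : Summable (fun n : ℤ =>
        (tailSum (fun m => derivWithin (α m) (Ico 0 T) t) (n + 1)) ^ 2) := by
      have := (Equiv.addRight (1:ℤ)).summable_iff.mpr hS2
      simpa [Function.comp_def] using this
    have hPsum : Summable P := by
      apply Summable.of_abs
      refine Summable.of_nonneg_of_le (fun n => abs_nonneg _) (fun n => ?_)
        ((ha2.add hS2').mul_left (1 + χ))
      ·
        have h1 : |α n t + χ * Real.sin (α n t)| ≤ (1 + χ) * |α n t| := by
          have h2 : |Real.sin (α n t)| ≤ |α n t| := Real.abs_sin_le_abs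
          calc |α n t + χ * Real.sin (α n t)| ≤ |α n t| + |χ * Real.sin (α n t)| := abs_add_le _ _
            _ ≤ (1 + χ) * |α n t| := by rw [abs_mul, abs_of_pos hχ]; nlinarith
        rw [hPdef]
        simp only [abs_mul]
        calc |α n t + χ * Real.sin (α n t)|
              * |tailSum (fun m => derivWithin (α m) (Ico 0 T) t) (n + 1)|
            ≤ (1 + χ) * (|α n t|
              * |tailSum (fun m => derivWithin (α m) (Ico 0 T) t) (n + 1)|) := by
              have h3 := abs_nonneg (tailSum (fun m => derivWithin (α m) (Ico 0 T) t) (n + 1))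
              nlinarith [abs_nonneg (α n t), mul_le_mul_of_nonneg_right h1 h3]
          _ ≤ (1 + χ) * ((α n t) ^ 2
              + (tailSum (fun m => derivWithin (α m) (Ico 0 T) t) (n + 1)) ^ 2) := by
              have h4 := abs_nonneg (α n t)
              have h5 := abs_nonneg (tailSum (fun m => derivWithin (α m) (Ico 0 T) t) (n + 1))
              have h6 : |α n t| * |tailSum (fun m => derivWithin (α m) (Ico 0 T) t) (n + 1)|
                  ≤ (α n t) ^ 2
                    + (tailSum (fun m => derivWithin (α m) (Ico 0 T) t) (n + 1)) ^ 2 := by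
                nlinarith [sq_abs (α n t),
                  sq_abs (tailSum (fun m => derivWithin (α m) (Ico 0 T) t) (n + 1)),
                  sq_nonneg (|α n t|
                    - |tailSum (fun m => derivWithin (α m) (Ico 0 T) t) (n + 1)|)]
              nlinarith
    have hPsum' : Summable (fun n : ℤ => P (n - 1)) := by
      have := (Equiv.subRight (1:ℤ)).summable_iff.mpr hPsum
      simpa [Function.comp_def] using this
    have htz : (∑' n : ℤ, (P n - P (n - 1))) = 0 := by
      rw [Summable.tsum_sub hPsum hPsum',
        show (∑' n : ℤ, P (n - 1)) = ∑' n : ℤ, P n from (Equiv.subRight (1:ℤ)).tsum_eq P]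
      ring
    have hcg : (∑' n : ℤ, derivWithin (e n) (Ico 0 T) t) = ∑' n : ℤ, (P n - P (n - 1)) := by
      apply tsum_congr
      intro n
      rw [heD n t ht, hPdef]
      simp only
      rw [show n - 1 + 1 = n from by ring]
    rw [hcg]
    exact htz
  -- continuity of the energy
  have hEcont : ContinuousOn (fun τ => ∑' n : ℤ, e n τ) (Ico 0 T) :=
    hu1.continuousOn (Eventually.of_forall fun s =>
      continuousOn_finset_sum s fun n _ => (hdiff n).continuousOn).frequently
  -- zero derivative on the interior
  have hED : ∀ x ∈ Ioo (0:ℝ) T, HasDerivAt (fun τ => ∑' n : ℤ, e n τ) 0 x := by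
    intro x hx
    have hxI : x ∈ Ico (0:ℝ) T := Ioo_subset_Ico_self hx
    have h := hasDerivAt_of_tendstoLocallyUniformlyOn isOpen_Ioo
      (hu2.mono Ioo_subset_Ico_self)
      (Eventually.of_forall fun s => fun y hy => HasDerivAt.fun_sum fun n _ =>
        (((hdiff n) y (Ioo_subset_Ico_self hy)).hasDerivWithinAt.hasDerivAt
          (Ico_mem_nhds hy.1 hy.2)))
      (fun y hy => ((hconv y (Ioo_subset_Ico_self hy)).hasSum))
      hx
    rw [hgE x hxI] at h
    exact h
  intro t ht
  rcases eq_or_lt_of_le ht.1 with h0 | h0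
  · rw [← h0]
  · -- constancy on the open interval
    have hconstIoo : ∀ a ∈ Ioo (0:ℝ) T, ∀ b ∈ Ioo (0:ℝ) T, a ≤ b →
        (∑' n : ℤ, e n b) = ∑' n : ℤ, e n a := by
      intro a ha b hb hab
      have hIccsub : Icc a b ⊆ Ico (0:ℝ) T :=
        fun x hx => ⟨le_trans ha.1.le hx.1, lt_of_le_of_lt hx.2 hb.2⟩
      have := constant_of_has_deriv_right_zero (hEcont.mono hIccsub)
        (fun x hx =>
          ((hED x ⟨lt_of_lt_of_le ha.1 hx.1, lt_trans hx.2 hb.2⟩).hasDerivWithinAt))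
      exact this b (right_mem_Icc.mpr hab)
    have hseq : ∀ k : ℕ, t / ((k : ℝ) + 2) ∈ Ioo (0:ℝ) T := by
      intro k
      have hk2 : (1:ℝ) < (k : ℝ) + 2 := by
        have := Nat.cast_nonneg (α := ℝ) k
        linarith
      constructor
      · positivity
      · have h1 : t / ((k : ℝ) + 2) < t := div_lt_self h0 hk2
        linarith [ht.2]
    have hseqle : ∀ k : ℕ, t / ((k : ℝ) + 2) ≤ t := by
      intro k
      have hk2 : (1:ℝ) < (k : ℝ) + 2 := by
        have := Nat.cast_nonneg (α := ℝ) k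
        linarith
      exact (div_lt_self h0 hk2).le
    have hEconst : ∀ k : ℕ, (∑' n : ℤ, e n t) = ∑' n : ℤ, e n (t / ((k : ℝ) + 2)) :=
      fun k => hconstIoo _ (hseq k) t ⟨h0, ht.2⟩ (hseqle k)
    have htend0 : Tendsto (fun k : ℕ => t / ((k : ℝ) + 2)) atTop (𝓝 0) := by
      apply Filter.Tendsto.div_atTop tendsto_const_nhds
      exact Filter.tendsto_atTop_add_const_right _ 2 tendsto_natCast_atTop_atTop
    have htendin : Tendsto (fun k : ℕ => t / ((k : ℝ) + 2)) atTop (𝓝[Ico (0:ℝ) T] 0) := by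
      rw [tendsto_nhdsWithin_iff]
      exact ⟨htend0, Eventually.of_forall fun k => ⟨(hseq k).1.le, (hseq k).2⟩⟩
    have hc0 : Tendsto (fun k : ℕ => ∑' n : ℤ, e n (t / ((k : ℝ) + 2))) atTop
        (𝓝 (∑' n : ℤ, e n 0)) :=
      by
      have hcomp := ((hEcont 0 ⟨le_rfl, hT⟩).tendsto).comp htendin
      simpa [Function.comp_def] using hcomp
    have hc1 : Tendsto (fun k : ℕ => ∑' n : ℤ, e n (t / ((k : ℝ) + 2))) atTop
        (𝓝 (∑' n : ℤ, e n t)) := by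
      have heq : (fun k : ℕ => ∑' n : ℤ, e n (t / ((k : ℝ) + 2)))
          = fun _ : ℕ => ∑' n : ℤ, e n t := funext fun k => (hEconst k).symm
      rw [heq]
      exact tendsto_const_nhds
    exact tendsto_nhds_unique hc1 hc0
end

section
/- Let p ≥ 2 be an integer and χ_p > 0, and let (a_n)_{n∈ℤ} and (b_n)_{n∈ℤ} be real sequences with Σ_{n∈ℤ} (a_n² + b_n²) < ∞. Then there exists T > 0 and a family u = (u_n)_{n∈ℤ} of C² real functions on [0,T) solving the on-site lattice equation ü_n(t) = Δu_n(t) − χ_p·u_n(t)^p for all n ∈ ℤ and t ∈ [0,T), with u_n(0) = a_n and u̇_n(0) = b_n for all n, and with sup_{0≤t<T} Σ_{n∈ℤ} [ u̇_n(t)² + u_n(t)² ] < ∞; moreover u is the unique such solution on [0,T). -/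
open Set Filter

open Set Filter

noncomputable section

local instance fact12 : Fact ((1:ENNReal) ≤ 2) := ⟨one_le_two⟩

abbrev Xsp : Type := lp (fun _ : ℤ => ℝ) 2

namespace Xsp

lemma toReal_two : ((2:ENNReal)).toReal = (2:ℝ) := by simp

lemma rpow_norm (x : ℝ) : ‖x‖ ^ ((2:ENNReal)).toReal = x ^ 2 := by
  rw [toReal_two]
  rw [show ((2:ℝ)) = ((2:ℕ):ℝ) by norm_num, Real.rpow_natCast]
  simp [sq_abs]

lemma summable_sq (x : Xsp) : Summable fun n : ℤ => (x n) ^ 2 := by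
  have h := (lp.memℓp x).summable (by rw [toReal_two]; norm_num)
  exact h.congr fun n => rpow_norm (x n)

lemma tsum_sq_eq (x : Xsp) : ∑' n : ℤ, (x n) ^ 2 = ‖x‖ ^ 2 := by
  have h := lp.norm_rpow_eq_tsum (p := 2) (by rw [toReal_two]; norm_num) x
  have h2 : ∑' n : ℤ, ‖x n‖ ^ ((2:ENNReal)).toReal = ∑' n : ℤ, (x n)^2 :=
    tsum_congr fun n => rpow_norm (x n)
  rw [h2] at h
  rw [← h, toReal_two]
  rw [show ((2:ℝ)) = ((2:ℕ):ℝ) by norm_num, Real.rpow_natCast]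

lemma coord_abs_le (x : Xsp) (n : ℤ) : |x n| ≤ ‖x‖ := by
  simpa using lp.norm_apply_le_norm (by norm_num) x n

lemma memℓp_of_le {f : ℤ → ℝ} (y : Xsp) (c : ℝ) (h : ∀ n, |f n| ≤ c * |y n|) :
    Memℓp f 2 := by
  apply memℓp_gen
  have hs : Summable fun n : ℤ => c ^ 2 * (y n) ^ 2 := (summable_sq y).mul_left _
  have : Summable fun n : ℤ => (f n) ^ 2 := by
    refine hs.of_nonneg_of_le (fun n => sq_nonneg _) (fun n => ?_)
    have h1 : |f n| ^ 2 ≤ (c * |y n|) ^ 2 := by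
      apply pow_le_pow_left₀ (abs_nonneg _) (h n) 2
    calc (f n) ^ 2 = |f n| ^ 2 := (sq_abs _).symm
      _ ≤ (c * |y n|) ^ 2 := h1
      _ = c ^ 2 * (y n) ^ 2 := by rw [mul_pow, sq_abs]
  exact this.congr fun n => (rpow_norm (f n)).symm

lemma norm_le_of_le {x y : Xsp} {c : ℝ} (hc : 0 ≤ c) (h : ∀ n, |x n| ≤ c * |y n|) :
    ‖x‖ ≤ c * ‖y‖ := by
  apply lp.norm_le_of_tsum_le (by rw [toReal_two]; norm_num)
    (mul_nonneg hc (norm_nonneg _))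
  have h1 : ∑' n : ℤ, ‖x n‖ ^ ((2:ENNReal)).toReal = ∑' n : ℤ, (x n)^2 :=
    tsum_congr fun n => rpow_norm (x n)
  rw [h1]
  have h2 : (c * ‖y‖) ^ ((2:ENNReal)).toReal = c^2 * ‖y‖^2 := by
    rw [Xsp.toReal_two, show ((2:ℝ)) = ((2:ℕ):ℝ) by norm_num, Real.rpow_natCast, mul_pow]
  rw [h2, ← tsum_sq_eq y, ← tsum_mul_left]
  refine Summable.tsum_le_tsum (fun n => ?_) (summable_sq x) ((summable_sq y).mul_left _)
  calc (x n) ^ 2 = |x n| ^ 2 := (sq_abs _).symm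
    _ ≤ (c * |y n|) ^ 2 := pow_le_pow_left₀ (abs_nonneg _) (h n) 2
    _ = c ^ 2 * (y n) ^ 2 := by rw [mul_pow, sq_abs]

end Xsp
/-- pointwise power difference bound -/
lemma abs_pow_sub_pow_le_aux (k : ℕ) {a b R : ℝ} (ha : |a| ≤ R) (hb : |b| ≤ R) :
    |a ^ (k+1) - b ^ (k+1)| ≤ (k+1) * R ^ k * |a - b| := by
  have hR : 0 ≤ R := (abs_nonneg a).trans ha
  induction k with
  | zero => simp
  | succ k ih =>
    have key : a ^ (k+2) - b ^ (k+2) = a ^ (k+1) * (a - b) + b * (a ^ (k+1) - b ^ (k+1)) := by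
      ring
    have h1 : |a ^ (k+1)| ≤ R ^ (k+1) := by
      rw [abs_pow]; exact pow_le_pow_left₀ (abs_nonneg a) ha _
    calc |a ^ (k+2) - b ^ (k+2)|
        ≤ |a ^ (k+1) * (a - b)| + |b * (a ^ (k+1) - b ^ (k+1))| := by
          rw [key]; exact abs_add_le _ _
      _ ≤ R ^ (k+1) * |a - b| + R * ((k+1) * R ^ k * |a - b|) := by
          rw [abs_mul, abs_mul]
          gcongr
      _ = ((k:ℝ) + 2) * R ^ (k+1) * |a - b| := by ring
      _ = ((k+1:ℕ)+1) * R ^ (k+1) * |a - b| := by push_cast; ring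

namespace Xsp

lemma summable_shift (k : ℤ) (x : Xsp) :
    Summable fun n : ℤ => ‖x (n + k)‖ ^ ((2:ENNReal)).toReal := by
  have h := (lp.memℓp x).summable (p := 2) (by rw [toReal_two]; norm_num)
  have := ((Equiv.addRight k).summable_iff
    (f := fun n : ℤ => ‖x n‖ ^ ((2:ENNReal)).toReal)).mpr h
  simpa [Function.comp_def] using this

def shiftX (k : ℤ) (x : Xsp) : Xsp :=
  ⟨fun n => x (n + k), memℓp_gen (summable_shift k x)⟩

@[simp] lemma shiftX_apply (k : ℤ) (x : Xsp) (n : ℤ) : shiftX k x n = x (n + k) := rfl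

lemma shiftX_norm_le (k : ℤ) (x : Xsp) : ‖shiftX k x‖ ≤ ‖x‖ := by
  apply lp.norm_le_of_tsum_le (by rw [toReal_two]; norm_num) (norm_nonneg _)
  have h1 : ∑' n : ℤ, ‖shiftX k x n‖ ^ ((2:ENNReal)).toReal
      = ∑' n : ℤ, ‖x n‖ ^ ((2:ENNReal)).toReal := by
    have := ((Equiv.addRight k).tsum_eq (f := fun n : ℤ => ‖x n‖ ^ ((2:ENNReal)).toReal))
    simpa [Function.comp] using this
  rw [h1, ← lp.norm_rpow_eq_tsum (by rw [toReal_two]; norm_num) x]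

def powX (k : ℕ) (x : Xsp) : Xsp :=
  ⟨fun n => (x n) ^ (k+1), by
    apply memℓp_of_le x (‖x‖ ^ k)
    intro n
    rw [abs_pow, pow_succ]
    exact mul_le_mul_of_nonneg_right
      (pow_le_pow_left₀ (abs_nonneg _) (coord_abs_le x n) k) (abs_nonneg _)⟩

@[simp] lemma powX_apply (k : ℕ) (x : Xsp) (n : ℤ) : powX k x n = (x n) ^ (k+1) := rfl

lemma powX_norm_le (k : ℕ) (x : Xsp) : ‖powX k x‖ ≤ ‖x‖ ^ k * ‖x‖ := by
  have := norm_le_of_le (x := powX k x) (y := x) (c := ‖x‖ ^ k)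
    (pow_nonneg (norm_nonneg _) _) (fun n => by
      rw [powX_apply, abs_pow, pow_succ]
      exact mul_le_mul_of_nonneg_right
        (pow_le_pow_left₀ (abs_nonneg _) (coord_abs_le x n) k) (abs_nonneg _))
  exact this

lemma powX_sub_norm_le (k : ℕ) {x y : Xsp} {R : ℝ} (hx : ‖x‖ ≤ R) (hy : ‖y‖ ≤ R) :
    ‖powX k x - powX k y‖ ≤ ((k:ℝ)+1) * R ^ k * ‖x - y‖ := by
  have hR : 0 ≤ R := (norm_nonneg x).trans hx
  apply norm_le_of_le (c := ((k:ℝ)+1) * R ^ k) (by positivity)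
  intro n
  have hxa : |x n| ≤ R := (coord_abs_le x n).trans hx
  have hya : |y n| ≤ R := (coord_abs_le y n).trans hy
  have h := abs_pow_sub_pow_le_aux k hxa hya
  simp only [lp.coeFn_sub, Pi.sub_apply, powX_apply]
  convert h using 2

def lapX (x : Xsp) : Xsp := shiftX 1 x + shiftX (-1) x - (2:ℝ) • x

lemma lapX_apply (x : Xsp) (n : ℤ) : lapX x n = x (n+1) + x (n-1) - 2 * x n := by
  simp only [lapX, lp.coeFn_add, lp.coeFn_sub, lp.coeFn_smul, Pi.add_apply, Pi.sub_apply,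
    Pi.smul_apply, shiftX_apply, smul_eq_mul]
  simp [sub_eq_add_neg]

lemma lapX_norm_le (x : Xsp) : ‖lapX x‖ ≤ 4 * ‖x‖ := by
  calc ‖lapX x‖ ≤ ‖shiftX 1 x + shiftX (-1) x‖ + ‖(2:ℝ) • x‖ := norm_sub_le _ _
    _ ≤ ‖shiftX 1 x‖ + ‖shiftX (-1) x‖ + ‖(2:ℝ) • x‖ := by gcongr; exact norm_add_le _ _
    _ ≤ ‖x‖ + ‖x‖ + 2 * ‖x‖ := by
        have h1 := shiftX_norm_le 1 x
        have h2 := shiftX_norm_le (-1) x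
        have h3 : ‖(2:ℝ) • x‖ = 2 * ‖x‖ := by rw [norm_smul]; simp
        rw [h3]; linarith
    _ = 4 * ‖x‖ := by ring

lemma lapX_sub (x y : Xsp) : lapX x - lapX y = lapX (x - y) := by
  ext n
  have h1 := lapX_apply x n
  have h2 := lapX_apply y n
  have h3 := lapX_apply (x - y) n
  simp only [lp.coeFn_sub, Pi.sub_apply] at *
  rw [h1, h2, h3]
  ring

/-- coordinate evaluation as a continuous linear map -/
def coordL (n : ℤ) : Xsp →L[ℝ] ℝ :=
  LinearMap.mkContinuous
    { toFun := fun x => x n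
      map_add' := fun x y => by simp [lp.coeFn_add]
      map_smul' := fun c x => by simp [lp.coeFn_smul] }
    1 (fun x => by rw [one_mul, Real.norm_eq_abs]; exact coord_abs_le x n)

@[simp] lemma coordL_apply (n : ℤ) (x : Xsp) : coordL n x = x n := rfl

end Xsp

section FTC

open intervalIntegral MeasureTheory

/-- Fundamental theorem of calculus on `Ico 0 T` with `derivWithin`-style derivatives. -/
lemma ftc_ico {T : ℝ} {g g' : ℝ → ℝ}
    (hg : ∀ σ ∈ Set.Ico (0:ℝ) T, HasDerivWithinAt g (g' σ) (Set.Ico (0:ℝ) T) σ)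
    (hgc : ContinuousOn g (Set.Ico (0:ℝ) T))
    (hg'c : ContinuousOn g' (Set.Ico (0:ℝ) T))
    {t : ℝ} (ht : t ∈ Set.Ico (0:ℝ) T) :
    g t = g 0 + ∫ σ in (0:ℝ)..t, g' σ := by
  have hsub : Set.Icc (0:ℝ) t ⊆ Set.Ico (0:ℝ) T := fun σ hσ =>
    ⟨hσ.1, lt_of_le_of_lt hσ.2 ht.2⟩
  have key : ∫ σ in (0:ℝ)..t, g' σ = g t - g 0 := by
    apply integral_eq_sub_of_hasDeriv_right_of_le ht.1 (hgc.mono hsub)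
    · intro σ hσ
      have hmem : Set.Ico (0:ℝ) T ∈ nhds σ := by
        apply Filter.mem_of_superset
          (isOpen_Ioo.mem_nhds (show σ ∈ Set.Ioo (0:ℝ) T from ⟨hσ.1, hσ.2.trans ht.2⟩))
          Set.Ioo_subset_Ico_self
      exact ((hg σ (hsub ⟨le_of_lt hσ.1, le_of_lt hσ.2⟩)).hasDerivAt hmem).hasDerivWithinAt
    · have : ContinuousOn g' (Set.uIcc (0:ℝ) t) := by
        rw [Set.uIcc_of_le ht.1]; exact hg'c.mono hsub
      exact this.intervalIntegrable
  linarith [key]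

/-- Bound for interval integrals by a polynomial majorant. -/
lemma integral_abs_pow_le {t c : ℝ} {k : ℕ} (ht : 0 ≤ t) {g : ℝ → ℝ}
    (hgc : ContinuousOn g (Set.Icc 0 t)) (hc : 0 ≤ c)
    (hb : ∀ σ ∈ Set.Icc (0:ℝ) t, |g σ| ≤ c * σ ^ k) :
    |∫ σ in (0:ℝ)..t, g σ| ≤ c * t ^ (k+1) / ((k:ℝ)+1) := by
  have huIcc : Set.uIcc (0:ℝ) t = Set.Icc 0 t := Set.uIcc_of_le ht
  have hgi : IntervalIntegrable g volume 0 t := by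
    apply ContinuousOn.intervalIntegrable; rw [huIcc]; exact hgc
  have hgia : IntervalIntegrable (fun σ => |g σ|) volume 0 t := by
    apply ContinuousOn.intervalIntegrable; rw [huIcc]; exact hgc.abs
  have hpi : IntervalIntegrable (fun σ => c * σ ^ k) volume 0 t :=
    (Continuous.intervalIntegrable (by continuity) _ _)
  calc |∫ σ in (0:ℝ)..t, g σ| ≤ ∫ σ in (0:ℝ)..t, |g σ| :=
        intervalIntegral.abs_integral_le_integral_abs ht
    _ ≤ ∫ σ in (0:ℝ)..t, c * σ ^ k := by
        apply intervalIntegral.integral_mono_on ht hgia hpi hb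
    _ = c * (t ^ (k+1) - 0 ^ (k+1)) / ((k:ℝ)+1) := by
        rw [intervalIntegral.integral_const_mul, integral_pow]
        push_cast
        ring
    _ = c * t ^ (k+1) / ((k:ℝ)+1) := by
        rw [zero_pow (Nat.succ_ne_zero k)]
        ring

end FTC

section C2helper

/-- `C²` from explicit first and second derivatives with continuous second derivative. -/
lemma contDiffOn_two_of_derivs {s : Set ℝ} (hs : UniqueDiffOn ℝ s) (g g' g'' : ℝ → ℝ)
    (h1 : ∀ t ∈ s, HasDerivWithinAt g (g' t) s t)
    (h2 : ∀ t ∈ s, HasDerivWithinAt g' (g'' t) s t)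
    (h3 : ContinuousOn g'' s) : ContDiffOn ℝ 2 g s := by
  have hgd : DifferentiableOn ℝ g s := fun t ht => (h1 t ht).differentiableWithinAt
  have hg'd : DifferentiableOn ℝ g' s := fun t ht => (h2 t ht).differentiableWithinAt
  have hdw : ∀ t ∈ s, derivWithin g s t = g' t := fun t ht => (h1 t ht).derivWithin (hs t ht)
  have hdw2 : ∀ t ∈ s, derivWithin g' s t = g'' t := fun t ht => (h2 t ht).derivWithin (hs t ht)
  have hg'c1 : ContDiffOn ℝ 1 g' s := by
    rw [show ((1 : WithTop ℕ∞)) = 0 + 1 by norm_num, contDiffOn_succ_iff_derivWithin hs]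
    refine ⟨hg'd, by simp, ?_⟩
    rw [contDiffOn_zero]
    exact h3.congr hdw2
  rw [show ((2 : WithTop ℕ∞)) = 1 + 1 by norm_num, contDiffOn_succ_iff_derivWithin hs]
  refine ⟨hgd, by simp, ?_⟩
  exact hg'c1.congr hdw

end C2helper

section Uniqueness

/-- Gronwall-type uniqueness for the on-site lattice equation, given uniform pointwise
bounds on the solutions and their first derivatives. -/
lemma onsite_unique (k : ℕ) (χ : ℝ) (hχ : 0 < χ) {T B : ℝ} (hT : 0 < T)
    (v v' : ℤ → ℝ → ℝ)
    (hc : ∀ n, ContDiffOn ℝ 2 (v n) (Set.Ico 0 T))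
    (hc' : ∀ n, ContDiffOn ℝ 2 (v' n) (Set.Ico 0 T))
    (hsol : SolvesOnSite (k+1) χ v (Set.Ico 0 T))
    (hsol' : SolvesOnSite (k+1) χ v' (Set.Ico 0 T))
    (h0 : ∀ n, v' n 0 = v n 0)
    (hd0 : ∀ n, derivWithin (v' n) (Set.Ico 0 T) 0 = derivWithin (v n) (Set.Ico 0 T) 0)
    (hBv : ∀ n, ∀ τ ∈ Set.Ico (0:ℝ) T, |v n τ| ≤ B)
    (hBv' : ∀ n, ∀ τ ∈ Set.Ico (0:ℝ) T, |v' n τ| ≤ B)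
    (hBd : ∀ n, ∀ τ ∈ Set.Ico (0:ℝ) T, |derivWithin (v n) (Set.Ico 0 T) τ| ≤ B)
    (hBd' : ∀ n, ∀ τ ∈ Set.Ico (0:ℝ) T, |derivWithin (v' n) (Set.Ico 0 T) τ| ≤ B) :
    ∀ n, ∀ t ∈ Set.Ico (0:ℝ) T, v' n t = v n t := by
  have hB0 : 0 ≤ B := (abs_nonneg _).trans (hBv 0 0 ⟨le_refl _, hT⟩)
  have hud : UniqueDiffOn ℝ (Set.Ico (0:ℝ) T) := uniqueDiffOn_Ico 0 T
  set s : Set ℝ := Set.Ico (0:ℝ) T with hs_def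
  -- abbreviations for constants
  set C₁ : ℝ := 4 + χ * (((k:ℝ)+1) * B ^ k) with hC₁
  set Cc : ℝ := 5 + χ * (((k:ℝ)+1) * B ^ k) with hCc
  have hC₁0 : 0 ≤ C₁ := by positivity
  have hCc0 : 0 < Cc := by positivity
  have hC₁Cc : C₁ + 1 ≤ Cc := by rw [hC₁, hCc]; linarith
  -- differentiability facts
  have hdiff : ∀ n, DifferentiableOn ℝ (v n) s := fun n =>
    (hc n).differentiableOn (by norm_num)
  have hdiff' : ∀ n, DifferentiableOn ℝ (v' n) s := fun n =>
    (hc' n).differentiableOn (by norm_num)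
  have hdc : ∀ n, ContDiffOn ℝ 1 (derivWithin (v n) s) s := fun n =>
    (hc n).derivWithin hud (by norm_num)
  have hdc' : ∀ n, ContDiffOn ℝ 1 (derivWithin (v' n) s) s := fun n =>
    (hc' n).derivWithin hud (by norm_num)
  have hdd : ∀ n, DifferentiableOn ℝ (derivWithin (v n) s) s := fun n =>
    (hdc n).differentiableOn (by norm_num)
  have hdd' : ∀ n, DifferentiableOn ℝ (derivWithin (v' n) s) s := fun n =>
    (hdc' n).differentiableOn (by norm_num)
  -- first derivative of the difference
  have F1 : ∀ n, ∀ τ ∈ s, HasDerivWithinAt (fun σ => v' n σ - v n σ)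
      (derivWithin (v' n) s τ - derivWithin (v n) s τ) s τ := fun n τ hτ =>
    ((hdiff' n τ hτ).hasDerivWithinAt.sub (hdiff n τ hτ).hasDerivWithinAt)
  -- second derivative of the difference
  have F2 : ∀ n, ∀ τ ∈ s, HasDerivWithinAt
      (fun σ => derivWithin (v' n) s σ - derivWithin (v n) s σ)
      ((lap (fun m => v' m τ) n - χ * (v' n τ) ^ (k+1))
        - (lap (fun m => v m τ) n - χ * (v n τ) ^ (k+1))) s τ := by
    intro n τ hτ
    have h1 := (hdd' n τ hτ).hasDerivWithinAt
    have h2 := (hdd n τ hτ).hasDerivWithinAt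
    rw [hsol' n τ hτ] at h1
    rw [hsol n τ hτ] at h2
    exact h1.sub h2
  -- continuity facts
  have hwc : ∀ n, ContinuousOn (fun σ => v' n σ - v n σ) s := fun n =>
    (hc' n).continuousOn.sub (hc n).continuousOn
  have hdwc : ∀ n, ContinuousOn
      (fun σ => derivWithin (v' n) s σ - derivWithin (v n) s σ) s := fun n =>
    (hdc' n).continuousOn.sub (hdc n).continuousOn
  have hddwc : ∀ n, ContinuousOn (fun σ =>
      (lap (fun m => v' m σ) n - χ * (v' n σ) ^ (k+1))
        - (lap (fun m => v m σ) n - χ * (v n σ) ^ (k+1))) s := by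
    intro n
    simp only [lap]
    apply ContinuousOn.sub
    · exact (((hc' (n+1)).continuousOn.add (hc' (n-1)).continuousOn).sub
        (continuousOn_const.mul (hc' n).continuousOn)).sub
        (continuousOn_const.mul ((hc' n).continuousOn.pow _))
    · exact (((hc (n+1)).continuousOn.add (hc (n-1)).continuousOn).sub
        (continuousOn_const.mul (hc n).continuousOn)).sub
        (continuousOn_const.mul ((hc n).continuousOn.pow _))
  -- initial values
  have hw0 : ∀ n, v' n 0 - v n 0 = 0 := fun n => by rw [h0 n]; ring
  have hdw0 : ∀ n, derivWithin (v' n) s 0 - derivWithin (v n) s 0 = 0 := fun n => by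
    rw [hd0 n]; ring
  -- the key Gronwall-type iteration
  have key : ∀ j : ℕ, ∀ n : ℤ, ∀ τ ∈ s,
      |v' n τ - v n τ| + |derivWithin (v' n) s τ - derivWithin (v n) s τ|
        ≤ 4 * B * (Cc * τ) ^ j / (j.factorial : ℝ) := by
    intro j
    induction j with
    | zero =>
      intro n τ hτ
      have e1 : |v' n τ - v n τ| ≤ 2 * B := by
        calc |v' n τ - v n τ| ≤ |v' n τ| + |v n τ| := abs_sub _ _
          _ ≤ 2 * B := by linarith [hBv' n τ hτ, hBv n τ hτ]
      have e2 : |derivWithin (v' n) s τ - derivWithin (v n) s τ| ≤ 2 * B := by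
        calc |derivWithin (v' n) s τ - derivWithin (v n) s τ|
            ≤ |derivWithin (v' n) s τ| + |derivWithin (v n) s τ| := abs_sub _ _
          _ ≤ 2 * B := by linarith [hBd' n τ hτ, hBd n τ hτ]
      simp only [pow_zero, Nat.factorial_zero, Nat.cast_one]
      linarith
    | succ j ih =>
      intro n τ hτ
      have hτ0 : 0 ≤ τ := hτ.1
      have hsub : Set.Icc (0:ℝ) τ ⊆ s := fun σ hσ => ⟨hσ.1, lt_of_le_of_lt hσ.2 hτ.2⟩
      have hq0 : (0:ℝ) ≤ 4 * B * Cc ^ j / (j.factorial : ℝ) := by positivity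
      -- uniform coordinate bound from the induction hypothesis
      have ihw : ∀ m : ℤ, ∀ σ ∈ Set.Icc (0:ℝ) τ,
          |v' m σ - v m σ| ≤ (4 * B * Cc ^ j / (j.factorial : ℝ)) * σ ^ j := by
        intro m σ hσ
        have h := ih m σ (hsub hσ)
        have : |v' m σ - v m σ| ≤ 4 * B * (Cc * σ) ^ j / (j.factorial : ℝ) := by
          have := abs_nonneg (derivWithin (v' m) s σ - derivWithin (v m) s σ)
          linarith [ih m σ (hsub hσ)]
        calc |v' m σ - v m σ| ≤ 4 * B * (Cc * σ) ^ j / (j.factorial : ℝ) := this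
          _ = (4 * B * Cc ^ j / (j.factorial : ℝ)) * σ ^ j := by rw [mul_pow]; ring
      have ihdw : ∀ σ ∈ Set.Icc (0:ℝ) τ,
          |derivWithin (v' n) s σ - derivWithin (v n) s σ|
            ≤ (4 * B * Cc ^ j / (j.factorial : ℝ)) * σ ^ j := by
        intro σ hσ
        have h := ih n σ (hsub hσ)
        have : |derivWithin (v' n) s σ - derivWithin (v n) s σ|
            ≤ 4 * B * (Cc * σ) ^ j / (j.factorial : ℝ) := by
          have := abs_nonneg (v' n σ - v n σ)
          linarith
        calc |derivWithin (v' n) s σ - derivWithin (v n) s σ|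
            ≤ 4 * B * (Cc * σ) ^ j / (j.factorial : ℝ) := this
          _ = (4 * B * Cc ^ j / (j.factorial : ℝ)) * σ ^ j := by rw [mul_pow]; ring
      -- FTC for the difference
      have hw_eq : v' n τ - v n τ = ∫ σ in (0:ℝ)..τ,
          (derivWithin (v' n) s σ - derivWithin (v n) s σ) := by
        have := ftc_ico (g := fun σ => v' n σ - v n σ)
          (g' := fun σ => derivWithin (v' n) s σ - derivWithin (v n) s σ)
          (F1 n) (hwc n) (hdwc n) hτ
        simpa [hw0 n] using this
      have hdw_eq : derivWithin (v' n) s τ - derivWithin (v n) s τ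
          = ∫ σ in (0:ℝ)..τ,
          ((lap (fun m => v' m σ) n - χ * (v' n σ) ^ (k+1))
            - (lap (fun m => v m σ) n - χ * (v n σ) ^ (k+1))) := by
        have := ftc_ico (g := fun σ => derivWithin (v' n) s σ - derivWithin (v n) s σ)
          (g' := fun σ => (lap (fun m => v' m σ) n - χ * (v' n σ) ^ (k+1))
            - (lap (fun m => v m σ) n - χ * (v n σ) ^ (k+1)))
          (F2 n) (hdwc n) (hddwc n) hτ
        simpa [hdw0 n] using this
      -- bound on the second derivative of the difference
      have hddb : ∀ σ ∈ Set.Icc (0:ℝ) τ,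
          |(lap (fun m => v' m σ) n - χ * (v' n σ) ^ (k+1))
            - (lap (fun m => v m σ) n - χ * (v n σ) ^ (k+1))|
          ≤ (C₁ * (4 * B * Cc ^ j / (j.factorial : ℝ))) * σ ^ j := by
        intro σ hσ
        have hσs : σ ∈ s := hsub hσ
        have e1 := ihw (n+1) σ hσ
        have e2 := ihw (n-1) σ hσ
        have e3 := ihw n σ hσ
        have epow : |(v' n σ) ^ (k+1) - (v n σ) ^ (k+1)|
            ≤ ((k:ℝ)+1) * B ^ k * |v' n σ - v n σ| :=
          abs_pow_sub_pow_le_aux k (hBv' n σ hσs) (hBv n σ hσs)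
        have hsplit : (lap (fun m => v' m σ) n - χ * (v' n σ) ^ (k+1))
            - (lap (fun m => v m σ) n - χ * (v n σ) ^ (k+1))
            = ((v' (n+1) σ - v (n+1) σ) + (v' (n-1) σ - v (n-1) σ)
                - 2 * (v' n σ - v n σ))
              - χ * ((v' n σ) ^ (k+1) - (v n σ) ^ (k+1)) := by
          simp only [lap]; ring
        rw [hsplit]
        have t1 : |(v' (n+1) σ - v (n+1) σ) + (v' (n-1) σ - v (n-1) σ)
            - 2 * (v' n σ - v n σ)
            - χ * ((v' n σ) ^ (k+1) - (v n σ) ^ (k+1))|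
            ≤ |v' (n+1) σ - v (n+1) σ| + |v' (n-1) σ - v (n-1) σ|
              + 2 * |v' n σ - v n σ| + χ * |(v' n σ) ^ (k+1) - (v n σ) ^ (k+1)| := by
          have h1 := abs_add_le (v' (n+1) σ - v (n+1) σ) (v' (n-1) σ - v (n-1) σ)
          have h2 := abs_sub ((v' (n+1) σ - v (n+1) σ) + (v' (n-1) σ - v (n-1) σ))
            (2 * (v' n σ - v n σ))
          have h3 := abs_sub ((v' (n+1) σ - v (n+1) σ) + (v' (n-1) σ - v (n-1) σ)
            - 2 * (v' n σ - v n σ)) (χ * ((v' n σ) ^ (k+1) - (v n σ) ^ (k+1)))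
          have h4 : |2 * (v' n σ - v n σ)| = 2 * |v' n σ - v n σ| := by
            rw [abs_mul]; norm_num
          have h5 : |χ * ((v' n σ) ^ (k+1) - (v n σ) ^ (k+1))|
              = χ * |(v' n σ) ^ (k+1) - (v n σ) ^ (k+1)| := by
            rw [abs_mul, abs_of_pos hχ]
          rw [h4] at h2
          rw [h5] at h3
          linarith
        have hb3 : χ * |(v' n σ) ^ (k+1) - (v n σ) ^ (k+1)|
            ≤ χ * (((k:ℝ)+1) * B ^ k) * ((4 * B * Cc ^ j / (j.factorial : ℝ)) * σ ^ j) := by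
          have hstep := epow.trans (mul_le_mul_of_nonneg_left e3
            (show (0:ℝ) ≤ ((k:ℝ)+1) * B ^ k by positivity))
          calc χ * |(v' n σ) ^ (k+1) - (v n σ) ^ (k+1)|
              ≤ χ * (((k:ℝ)+1) * B ^ k * (4 * B * Cc ^ j / (j.factorial : ℝ) * σ ^ j)) :=
                mul_le_mul_of_nonneg_left hstep hχ.le
            _ = χ * (((k:ℝ)+1) * B ^ k) * ((4 * B * Cc ^ j / (j.factorial : ℝ)) * σ ^ j) := by
                ring
        calc |(v' (n+1) σ - v (n+1) σ) + (v' (n-1) σ - v (n-1) σ)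
            - 2 * (v' n σ - v n σ)
            - χ * ((v' n σ) ^ (k+1) - (v n σ) ^ (k+1))|
            ≤ |v' (n+1) σ - v (n+1) σ| + |v' (n-1) σ - v (n-1) σ|
              + 2 * |v' n σ - v n σ| + χ * |(v' n σ) ^ (k+1) - (v n σ) ^ (k+1)| := t1
          _ ≤ (C₁ * (4 * B * Cc ^ j / (j.factorial : ℝ))) * σ ^ j := by
              rw [hC₁]
              nlinarith [e1, e2, e3, hb3, abs_nonneg (v' n σ - v n σ)]
      -- continuity of integrands on `Icc 0 τ`
      have hcw : ContinuousOn (fun σ => derivWithin (v' n) s σ - derivWithin (v n) s σ)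
          (Set.Icc 0 τ) := (hdwc n).mono hsub
      have hcdd : ContinuousOn (fun σ =>
          (lap (fun m => v' m σ) n - χ * (v' n σ) ^ (k+1))
            - (lap (fun m => v m σ) n - χ * (v n σ) ^ (k+1))) (Set.Icc 0 τ) :=
        (hddwc n).mono hsub
      -- integral bounds
      have ibw : |v' n τ - v n τ|
          ≤ (4 * B * Cc ^ j / (j.factorial : ℝ)) * τ ^ (j+1) / ((j:ℝ)+1) := by
        rw [hw_eq]
        exact integral_abs_pow_le hτ0 hcw hq0 ihdw
      have ibdw : |derivWithin (v' n) s τ - derivWithin (v n) s τ|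
          ≤ (C₁ * (4 * B * Cc ^ j / (j.factorial : ℝ))) * τ ^ (j+1) / ((j:ℝ)+1) := by
        rw [hdw_eq]
        exact integral_abs_pow_le hτ0 hcdd (by positivity) hddb
      -- combine
      have hfact : ((j+1).factorial : ℝ) = ((j:ℝ)+1) * (j.factorial : ℝ) := by
        rw [Nat.factorial_succ]; push_cast; ring
      have hrhs : 4 * B * (Cc * τ) ^ (j+1) / ((j+1).factorial : ℝ)
          = Cc * (4 * B * Cc ^ j / (j.factorial : ℝ)) * τ ^ (j+1) / ((j:ℝ)+1) := by
        rw [hfact, mul_pow]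
        have hj1 : ((j:ℝ)+1) ≠ 0 := by positivity
        have hjf : ((j.factorial : ℝ)) ≠ 0 := by positivity
        field_simp
        ring
      rw [hrhs]
      have hZ : (1 + C₁) * (4 * B * Cc ^ j / (j.factorial : ℝ)) * τ ^ (j+1) / ((j:ℝ)+1)
          = (4 * B * Cc ^ j / (j.factorial : ℝ)) * τ ^ (j+1) / ((j:ℝ)+1)
            + (C₁ * (4 * B * Cc ^ j / (j.factorial : ℝ))) * τ ^ (j+1) / ((j:ℝ)+1) := by
        ring
      have h1 : (1 + C₁) * (4 * B * Cc ^ j / (j.factorial : ℝ)) * τ ^ (j+1) / ((j:ℝ)+1)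
          ≤ Cc * (4 * B * Cc ^ j / (j.factorial : ℝ)) * τ ^ (j+1) / ((j:ℝ)+1) := by
        gcongr
        linarith
      linarith [ibw, ibdw, hZ, h1]
  -- conclusion via `j → ∞`
  intro n t ht
  have hlim0 : Filter.Tendsto (fun j : ℕ => (Cc * t) ^ j / (j.factorial : ℝ))
      Filter.atTop (nhds 0) := FloorSemiring.tendsto_pow_div_factorial_atTop (Cc * t)
  have hlim : Filter.Tendsto (fun j : ℕ => 4 * B * (Cc * t) ^ j / (j.factorial : ℝ))
      Filter.atTop (nhds 0) := by
    have := hlim0.const_mul (4 * B)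
    simpa [mul_div_assoc] using this
  have hle : |v' n t - v n t| ≤ 0 := by
    apply ge_of_tendsto hlim
    filter_upwards with j
    have := key j n t ht
    have h0' := abs_nonneg (derivWithin (v' n) s t - derivWithin (v n) s t)
    linarith
  have hz : v' n t - v n t = 0 := abs_nonpos_iff.mp hle
  linarith [hz]

end Uniqueness

set_option maxHeartbeats 2000000 in
/-- local existence and uniqueness for the on-site lattice
`ü_n = Δu_n - χ_p u_n^p` with square-summable initial data. -/
theorem onsite_local_existence_uniqueness (p : ℕ) (hp : 2 ≤ p) (χ : ℝ) (hχ : 0 < χ)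
    (a b : ℤ → ℝ)
    (hab : Summable fun n : ℤ => (a n) ^ 2 + (b n) ^ 2) :
    ∃ T : ℝ, 0 < T ∧ ∃ u : ℤ → ℝ → ℝ,
      ((∀ n : ℤ, ContDiffOn ℝ 2 (u n) (Ico 0 T)) ∧
        SolvesOnSite p χ u (Ico 0 T) ∧
        (∀ n : ℤ, u n 0 = a n) ∧
        (∀ n : ℤ, derivWithin (u n) (Ico 0 T) 0 = b n) ∧
        OnSiteFiniteEnergy u (Ico 0 T) T) ∧
      ∀ u' : ℤ → ℝ → ℝ,
        ((∀ n : ℤ, ContDiffOn ℝ 2 (u' n) (Ico 0 T)) ∧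
          SolvesOnSite p χ u' (Ico 0 T) ∧
          (∀ n : ℤ, u' n 0 = a n) ∧
          (∀ n : ℤ, derivWithin (u' n) (Ico 0 T) 0 = b n) ∧
          OnSiteFiniteEnergy u' (Ico 0 T) T) →
        ∀ n : ℤ, ∀ t ∈ Ico (0 : ℝ) T, u' n t = u n t := by
  classical
  obtain ⟨k, rfl⟩ : ∃ k, p = k + 1 := ⟨p - 1, by omega⟩
  -- initial data in ℓ²
  have hsa : Summable fun n : ℤ => (a n) ^ 2 :=
    hab.of_nonneg_of_le (fun n => sq_nonneg _) (fun n => by nlinarith [sq_nonneg (b n)])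
  have hsb : Summable fun n : ℤ => (b n) ^ 2 :=
    hab.of_nonneg_of_le (fun n => sq_nonneg _) (fun n => by nlinarith [sq_nonneg (a n)])
  have hma : Memℓp a 2 := memℓp_gen (hsa.congr fun n => (Xsp.rpow_norm (a n)).symm)
  have hmb : Memℓp b 2 := memℓp_gen (hsb.congr fun n => (Xsp.rpow_norm (b n)).symm)
  set xa : Xsp := ⟨a, hma⟩ with hxa
  set xb : Xsp := ⟨b, hmb⟩ with hxb
  set x₀ : Xsp × Xsp := (xa, xb) with hx₀
  -- the vector field
  set F : Xsp × Xsp → Xsp × Xsp :=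
    fun z => (z.2, Xsp.lapX z.1 - χ • Xsp.powX k z.1) with hF
  have hF1 : ∀ z : Xsp × Xsp, (F z).1 = z.2 := fun z => rfl
  have hF2 : ∀ z : Xsp × Xsp, (F z).2 = Xsp.lapX z.1 - χ • Xsp.powX k z.1 := fun z => rfl
  set B : ℝ := ‖x₀‖ + 1 with hB
  have hB1 : 1 ≤ B := by rw [hB]; linarith [norm_nonneg x₀]
  have hB0 : 0 < B := lt_of_lt_of_le one_pos hB1
  set C0 : ℝ := B + 4 * B + χ * (B ^ k * B) with hC0
  have hC00 : 0 < C0 := by positivity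
  set L0 : ℝ := 5 + χ * (((k:ℝ) + 1) * B ^ k) with hL0
  have hL00 : 0 ≤ L0 := by positivity
  set T : ℝ := 1 / (C0 + 1) with hTdef
  have hT : 0 < T := by positivity
  -- the ball bound
  have hball : ∀ z : Xsp × Xsp, z ∈ Metric.closedBall x₀ 1 → ‖z‖ ≤ B := by
    intro z hz
    have h1 : ‖z - x₀‖ ≤ 1 := by
      rw [← dist_eq_norm]; exact Metric.mem_closedBall.mp hz
    have h2 : ‖z‖ ≤ ‖z - x₀‖ + ‖x₀‖ := by simpa using norm_add_le (z - x₀) x₀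
    rw [hB]; linarith
  -- Picard-Lindelöf hypotheses
  have hpl : IsPicardLindelof (fun _ : ℝ => F) (tmin := 0) (tmax := T) ⟨0, ⟨le_refl _, hT.le⟩⟩ x₀ 1 0
      C0.toNNReal L0.toNNReal := by
    constructor
    · intro t _
      apply LipschitzOnWith.of_dist_le_mul
      intro z hz z' hz'
      have hz1 : ‖z.1‖ ≤ B := (norm_fst_le z).trans (hball z hz)
      have hz'1 : ‖z'.1‖ ≤ B := (norm_fst_le z').trans (hball z' hz')
      rw [dist_eq_norm, dist_eq_norm]
      have h1 : ‖(F z).1 - (F z').1‖ ≤ L0 * ‖z - z'‖ := by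
        rw [hF1, hF1]
        have hzz : z.2 - z'.2 = (z - z').2 := rfl
        rw [hzz]
        have hL5 : 5 ≤ L0 := by
          have : 0 ≤ χ * (((k:ℝ)+1) * B ^ k) := by positivity
          rw [hL0]; linarith
        calc ‖(z - z').2‖ ≤ ‖z - z'‖ := norm_snd_le _
          _ ≤ L0 * ‖z - z'‖ := by
              nlinarith [mul_nonneg (show (0:ℝ) ≤ L0 - 1 by linarith)
                (norm_nonneg (z - z'))]
      have h2 : ‖(F z).2 - (F z').2‖ ≤ L0 * ‖z - z'‖ := by
        have hsplit : (F z).2 - (F z').2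
            = Xsp.lapX (z.1 - z'.1) - χ • (Xsp.powX k z.1 - Xsp.powX k z'.1) := by
          rw [hF2, hF2, ← Xsp.lapX_sub, smul_sub]
          abel
        rw [hsplit]
        have e1 : ‖Xsp.lapX (z.1 - z'.1)‖ ≤ 4 * ‖z.1 - z'.1‖ := Xsp.lapX_norm_le _
        have e2 : ‖χ • (Xsp.powX k z.1 - Xsp.powX k z'.1)‖
            ≤ χ * (((k:ℝ)+1) * B ^ k * ‖z.1 - z'.1‖) := by
          rw [norm_smul, Real.norm_eq_abs, abs_of_pos hχ]
          have h := Xsp.powX_sub_norm_le k hz1 hz'1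
          have h' : ‖Xsp.powX k z.1 - Xsp.powX k z'.1‖
              ≤ ((k:ℝ)+1) * B ^ k * ‖z.1 - z'.1‖ := h
          exact mul_le_mul_of_nonneg_left h' hχ.le
        have e3 : ‖z.1 - z'.1‖ ≤ ‖z - z'‖ := norm_fst_le (z - z')
        have hcoef : (0:ℝ) ≤ 4 + χ * (((k:ℝ)+1) * B ^ k) := by positivity
        calc ‖Xsp.lapX (z.1 - z'.1) - χ • (Xsp.powX k z.1 - Xsp.powX k z'.1)‖
            ≤ ‖Xsp.lapX (z.1 - z'.1)‖ + ‖χ • (Xsp.powX k z.1 - Xsp.powX k z'.1)‖ :=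
              norm_sub_le _ _
          _ ≤ 4 * ‖z.1 - z'.1‖ + χ * (((k:ℝ)+1) * B ^ k * ‖z.1 - z'.1‖) := by linarith
          _ = (4 + χ * (((k:ℝ)+1) * B ^ k)) * ‖z.1 - z'.1‖ := by ring
          _ ≤ (4 + χ * (((k:ℝ)+1) * B ^ k)) * ‖z - z'‖ :=
              mul_le_mul_of_nonneg_left e3 hcoef
          _ ≤ L0 * ‖z - z'‖ :=
              mul_le_mul_of_nonneg_right (by rw [hL0]; linarith) (norm_nonneg _)
      rw [Real.coe_toNNReal _ hL00, Prod.norm_def]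
      exact max_le h1 h2
    · intro x _
      exact continuousOn_const
    · intro t _ z hz
      have hz1 : ‖z.1‖ ≤ B := (norm_fst_le z).trans (hball z hz)
      have hz2 : ‖z.2‖ ≤ B := (norm_snd_le z).trans (hball z hz)
      rw [Real.coe_toNNReal _ hC00.le, Prod.norm_def]
      apply max_le
      · rw [hF1]
        rw [hC0]
        have h4 : (0:ℝ) ≤ χ * (B ^ k * B) :=
          mul_nonneg hχ.le (mul_nonneg (pow_nonneg hB0.le k) hB0.le)
        linarith
      · rw [hF2]
        have e1 : ‖Xsp.lapX z.1‖ ≤ 4 * B := by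
          calc ‖Xsp.lapX z.1‖ ≤ 4 * ‖z.1‖ := Xsp.lapX_norm_le _
            _ ≤ 4 * B := by linarith
        have e2 : ‖χ • Xsp.powX k z.1‖ ≤ χ * (B ^ k * B) := by
          rw [norm_smul, Real.norm_eq_abs, abs_of_pos hχ]
          apply mul_le_mul_of_nonneg_left _ hχ.le
          calc ‖Xsp.powX k z.1‖ ≤ ‖z.1‖ ^ k * ‖z.1‖ := Xsp.powX_norm_le k z.1
            _ ≤ B ^ k * B := by
                apply mul_le_mul (pow_le_pow_left₀ (norm_nonneg _) hz1 k) hz1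
                  (norm_nonneg _) (by positivity)
        calc ‖Xsp.lapX z.1 - χ • Xsp.powX k z.1‖
            ≤ ‖Xsp.lapX z.1‖ + ‖χ • Xsp.powX k z.1‖ := norm_sub_le _ _
          _ ≤ C0 := by rw [hC0]; linarith
    · simp only [Real.coe_toNNReal _ hC00.le, NNReal.coe_one, NNReal.coe_zero]
      rw [sub_zero, sub_self, max_eq_left hT.le, hTdef, mul_one_div, sub_zero,
        div_le_one (by positivity : (0:ℝ) < C0 + 1)]
      linarith
  obtain ⟨f, hf0, hfd⟩ := hpl.exists_eq_forall_mem_Icc_hasDerivWithinAt₀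
  replace hf0 : f 0 = x₀ := hf0
  have hsubI : Set.Ico (0:ℝ) T ⊆ Set.Icc 0 T := Set.Ico_subset_Icc_self
  have hud : UniqueDiffOn ℝ (Set.Ico (0:ℝ) T) := uniqueDiffOn_Ico 0 T
  have hds : ∀ t ∈ Set.Ico (0:ℝ) T, HasDerivWithinAt f (F (f t)) (Set.Ico 0 T) t :=
    fun t ht => (hfd t (hsubI ht)).mono hsubI
  have hfc : ContinuousOn f (Set.Icc 0 T) := fun t ht => (hfd t ht).continuousWithinAt
  obtain ⟨K, hK⟩ := (isCompact_Icc).exists_bound_of_continuousOn hfc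
  have hK0 : 0 ≤ K := le_trans (norm_nonneg (f 0)) (hK 0 ⟨le_refl _, hT.le⟩)
  set e1 : ℤ → (Xsp × Xsp →L[ℝ] ℝ) :=
    fun n => (Xsp.coordL n).comp (ContinuousLinearMap.fst ℝ Xsp Xsp) with he1
  set e2 : ℤ → (Xsp × Xsp →L[ℝ] ℝ) :=
    fun n => (Xsp.coordL n).comp (ContinuousLinearMap.snd ℝ Xsp Xsp) with he2
  set u : ℤ → ℝ → ℝ := fun n t => ((f t).1 : ∀ _ : ℤ, ℝ) n with hu
  have hcoord1 : ∀ n : ℤ, ∀ t ∈ Set.Ico (0:ℝ) T,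
      HasDerivWithinAt (u n) (((f t).2 : ∀ _ : ℤ, ℝ) n) (Set.Ico 0 T) t := by
    intro n t ht
    exact (e1 n).hasFDerivAt.comp_hasDerivWithinAt t (hds t ht)
  have hcoord2 : ∀ n : ℤ, ∀ t ∈ Set.Ico (0:ℝ) T,
      HasDerivWithinAt (fun τ => ((f τ).2 : ∀ _ : ℤ, ℝ) n)
        (((Xsp.lapX (f t).1 - χ • Xsp.powX k (f t).1) : Xsp) n) (Set.Ico 0 T) t := by
    intro n t ht
    exact (e2 n).hasFDerivAt.comp_hasDerivWithinAt t (hds t ht)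
  have hudw : ∀ n : ℤ, ∀ t ∈ Set.Ico (0:ℝ) T,
      derivWithin (u n) (Set.Ico 0 T) t = ((f t).2 : ∀ _ : ℤ, ℝ) n :=
    fun n t ht => (hcoord1 n t ht).derivWithin (hud t ht)
  have hg2 : ∀ n : ℤ, ∀ t : ℝ, ((Xsp.lapX (f t).1 - χ • Xsp.powX k (f t).1) : Xsp) n
      = lap (fun m => u m t) n - χ * (u n t) ^ (k+1) := by
    intro n t
    show (Xsp.lapX (f t).1) n - χ * (Xsp.powX k (f t).1) n = _
    simp [lp.coeFn_sub, lp.coeFn_smul, Pi.sub_apply, Pi.smul_apply, Xsp.lapX_apply,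
      Xsp.powX_apply, smul_eq_mul, lap, hu]
  have hsecond : ∀ n : ℤ, ∀ t ∈ Set.Ico (0:ℝ) T,
      HasDerivWithinAt (fun τ => ((f τ).2 : ∀ _ : ℤ, ℝ) n)
        (lap (fun m => u m t) n - χ * (u n t) ^ (k+1)) (Set.Ico 0 T) t := by
    intro n t ht
    have h := hcoord2 n t ht
    rwa [hg2 n t] at h
  have hc1 : ∀ n : ℤ, ContinuousOn (u n) (Set.Ico 0 T) := fun n t ht =>
    (hcoord1 n t ht).continuousWithinAt
  have hcg2 : ∀ n : ℤ, ContinuousOn (fun t => lap (fun m => u m t) n - χ * (u n t) ^ (k+1))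
      (Set.Ico 0 T) := by
    intro n
    simp only [lap]
    exact (((hc1 (n+1)).add (hc1 (n-1))).sub (continuousOn_const.mul (hc1 n))).sub
      (continuousOn_const.mul ((hc1 n).pow _))
  have hC2 : ∀ n : ℤ, ContDiffOn ℝ 2 (u n) (Set.Ico 0 T) := fun n =>
    contDiffOn_two_of_derivs hud (u n) (fun τ => ((f τ).2 : ∀ _ : ℤ, ℝ) n)
      (fun t => lap (fun m => u m t) n - χ * (u n t) ^ (k+1))
      (hcoord1 n) (hsecond n) (hcg2 n)
  have hsolve : SolvesOnSite (k+1) χ u (Set.Ico 0 T) := by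
    intro n t ht
    have hEq : Set.EqOn (derivWithin (u n) (Set.Ico 0 T))
        (fun τ => ((f τ).2 : ∀ _ : ℤ, ℝ) n) (Set.Ico 0 T) := fun τ hτ => hudw n τ hτ
    rw [derivWithin_congr hEq (hudw n t ht)]
    exact (hsecond n t ht).derivWithin (hud t ht)
  have hinit : ∀ n : ℤ, u n 0 = a n := by
    intro n
    show ((f 0).1 : ∀ _ : ℤ, ℝ) n = a n
    rw [hf0]
  have hinitd : ∀ n : ℤ, derivWithin (u n) (Set.Ico 0 T) 0 = b n := by
    intro n
    rw [hudw n 0 ⟨le_refl _, hT⟩, hf0]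
  have henergy : ∀ t ∈ Set.Ico (0:ℝ) T,
      (Summable fun n : ℤ => (derivWithin (u n) (Set.Ico 0 T) t)^2 + (u n t)^2) ∧
      (∑' n : ℤ, ((derivWithin (u n) (Set.Ico 0 T) t)^2 + (u n t)^2)) ≤ 2*K^2 := by
    intro t ht
    have hsum1 : Summable fun n : ℤ => (((f t).2 : ∀ _ : ℤ, ℝ) n)^2 := Xsp.summable_sq _
    have hsum2 : Summable fun n : ℤ => (((f t).1 : ∀ _ : ℤ, ℝ) n)^2 := Xsp.summable_sq _
    have hterm : ∀ n : ℤ, (derivWithin (u n) (Set.Ico 0 T) t)^2 + (u n t)^2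
        = (((f t).2 : ∀ _ : ℤ, ℝ) n)^2 + (((f t).1 : ∀ _ : ℤ, ℝ) n)^2 := by
      intro n; rw [hudw n t ht]
    constructor
    · exact ((hsum1.add hsum2).congr fun n => (hterm n).symm)
    · rw [tsum_congr hterm, Summable.tsum_add hsum1 hsum2, Xsp.tsum_sq_eq, Xsp.tsum_sq_eq]
      have hb1 : ‖(f t).1‖ ≤ K := (norm_fst_le (f t)).trans (hK t (hsubI ht))
      have hb2 : ‖(f t).2‖ ≤ K := (norm_snd_le (f t)).trans (hK t (hsubI ht))
      nlinarith [norm_nonneg (f t).1, norm_nonneg (f t).2]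
  refine ⟨T, hT, u, ⟨hC2, hsolve, hinit, hinitd, ⟨2*K^2, henergy⟩⟩, ?_⟩
  rintro u' ⟨hC2', hsolve', hinit', hinitd', M', hEn'⟩
  -- pointwise bounds from the energy estimates
  have habs : ∀ {x M : ℝ}, x^2 ≤ M → |x| ≤ Real.sqrt M := by
    intro x M h
    rw [← Real.sqrt_sq_eq_abs]
    exact Real.sqrt_le_sqrt h
  set Bu : ℝ := Real.sqrt (2*K^2) + Real.sqrt M' with hBu
  have hsq1 : (0:ℝ) ≤ Real.sqrt (2*K^2) := Real.sqrt_nonneg _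
  have hsq2 : (0:ℝ) ≤ Real.sqrt M' := Real.sqrt_nonneg _
  have hboundu : ∀ n : ℤ, ∀ τ ∈ Set.Ico (0:ℝ) T,
      (derivWithin (u n) (Set.Ico 0 T) τ)^2 + (u n τ)^2 ≤ 2*K^2 := by
    intro n τ hτ
    obtain ⟨hS, hM⟩ := henergy τ hτ
    exact le_trans (Summable.le_tsum hS n fun j _ => by positivity) hM
  have hboundu' : ∀ n : ℤ, ∀ τ ∈ Set.Ico (0:ℝ) T,
      (derivWithin (u' n) (Set.Ico 0 T) τ)^2 + (u' n τ)^2 ≤ M' := by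
    intro n τ hτ
    obtain ⟨hS, hM⟩ := hEn' τ hτ
    exact le_trans (Summable.le_tsum hS n fun j _ => by positivity) hM
  have hBv : ∀ n : ℤ, ∀ τ ∈ Set.Ico (0:ℝ) T, |u n τ| ≤ Bu := by
    intro n τ hτ
    have := hboundu n τ hτ
    have h1 : (u n τ)^2 ≤ 2*K^2 := by nlinarith [sq_nonneg (derivWithin (u n) (Set.Ico 0 T) τ)]
    linarith [habs h1]
  have hBd : ∀ n : ℤ, ∀ τ ∈ Set.Ico (0:ℝ) T, |derivWithin (u n) (Set.Ico 0 T) τ| ≤ Bu := by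
    intro n τ hτ
    have := hboundu n τ hτ
    have h1 : (derivWithin (u n) (Set.Ico 0 T) τ)^2 ≤ 2*K^2 := by nlinarith [sq_nonneg (u n τ)]
    linarith [habs h1]
  have hBv' : ∀ n : ℤ, ∀ τ ∈ Set.Ico (0:ℝ) T, |u' n τ| ≤ Bu := by
    intro n τ hτ
    have := hboundu' n τ hτ
    have h1 : (u' n τ)^2 ≤ M' := by nlinarith [sq_nonneg (derivWithin (u' n) (Set.Ico 0 T) τ)]
    linarith [habs h1]
  have hBd' : ∀ n : ℤ, ∀ τ ∈ Set.Ico (0:ℝ) T, |derivWithin (u' n) (Set.Ico 0 T) τ| ≤ Bu := by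
    intro n τ hτ
    have := hboundu' n τ hτ
    have h1 : (derivWithin (u' n) (Set.Ico 0 T) τ)^2 ≤ M' := by nlinarith [sq_nonneg (u' n τ)]
    linarith [habs h1]
  exact onsite_unique k χ hχ hT u u' hC2 hC2' hsolve hsolve'
    (fun n => by rw [hinit' n, hinit n])
    (fun n => by rw [hinitd' n, hinitd n])
    hBv hBv' hBd hBd'
end
end
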